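/- arXiv:1508.06883 — 7 statements merged into one kernel-verified Lean document; each statement's English description precedes it below -/
import Mathlib

section
/- Let k, n, m be integers with k ≥ 1, n ≥ k and 0 ≤ m ≤ n − k. Then for every x > 0, M_{n,k}(e_m; x) = ((n−k+m)!·(n−m)!)/((n−k)!·n!) · x^m, where e_m(t) = t^m. In other words, ((2n−k+1)!·x^{n+1}/(n!·(n−k)!)) ∫_0^∞ t^{n−k+m}/(x+t)^{2n−k+2} dt = ((n−k+m)!·(n−m)!)/((n−k)!·n!) · x^m. -/
open MeasureTheory Set Filter Topology

/-- The Gamma-type operator `M_{n,k}(f;x)`. -/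
noncomputable def Mnk (n k : ℕ) (f : ℝ → ℝ) (x : ℝ) : ℝ :=
  (((2 * n - k + 1).factorial : ℝ) * x ^ (n + 1) /
      ((n.factorial : ℝ) * ((n - k).factorial : ℝ))) *
    ∫ t in Ioi (0 : ℝ), t ^ (n - k) / (x + t) ^ (2 * n - k + 2) * f t

/-- The polynomial weight: `w_0 = 1`, `w_p(x) = 1/(1+x^p)` for `p ≥ 1`. -/
noncomputable def wp (p : ℕ) (x : ℝ) : ℝ := if p = 0 then 1 else 1 / (1 + x ^ p)

/-- The weighted sup-norm `‖f‖_p = sup_{x ≥ 0} w_p(x)|f(x)|`. -/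
noncomputable def pNorm (p : ℕ) (f : ℝ → ℝ) : ℝ :=
  ⨆ x : {x : ℝ // 0 ≤ x}, wp p x.val * |f x.val|

/-- Second symmetric difference `Δ_h² f`. -/
def Delta2 (h : ℝ) (f : ℝ → ℝ) (x : ℝ) : ℝ := f (x + 2 * h) - 2 * f (x + h) + f x

/-- Second weighted modulus of smoothness `ω_p²(f;δ)`. -/
noncomputable def omega2 (p : ℕ) (f : ℝ → ℝ) (δ : ℝ) : ℝ :=
  ⨆ h : {h : ℝ // 0 < h ∧ h ≤ δ}, pNorm p (Delta2 h.val f)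

/-- First weighted modulus `ω_p¹(f;δ)`. -/
noncomputable def omega1 (p : ℕ) (f : ℝ → ℝ) (δ : ℝ) : ℝ :=
  sSup {y : ℝ | ∃ t x : ℝ, 0 ≤ t ∧ 0 ≤ x ∧ |t - x| ≤ δ ∧ y = wp p x * |f t - f x|}

/-- Membership in the weighted space `C_p`: `w_p·f` is bounded and uniformly
continuous on `[0,∞)`. -/
def CpMem (p : ℕ) (f : ℝ → ℝ) : Prop :=
  (∃ B : ℝ, ∀ x ≥ (0 : ℝ), |wp p x * f x| ≤ B) ∧
    UniformContinuousOn (fun x => wp p x * f x) (Ici 0)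

/-- Steklov mean `f_h`. -/
noncomputable def steklov (f : ℝ → ℝ) (h : ℝ) (x : ℝ) : ℝ :=
  4 / h ^ 2 *
    ∫ s in (0 : ℝ)..(h / 2), ∫ t in (0 : ℝ)..(h / 2),
      (2 * f (x + s + t) - f (x + 2 * (s + t)))

lemma contOn_aux (x : ℝ) (a c : ℕ) {s : Set ℝ} (hs : ∀ t ∈ s, 0 < x + t) :
    ContinuousOn (fun t : ℝ => t ^ a * ((x + t) ^ c)⁻¹) s := by
  apply ContinuousOn.mul (continuous_pow a).continuousOn
  exact ContinuousOn.inv₀ (by fun_prop) (fun t ht => pow_ne_zero _ (hs t ht).ne')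

lemma integrable_aux (x : ℝ) (hx : 0 < x) (a c : ℕ) (hc : a + 2 ≤ c) :
    IntegrableOn (fun t : ℝ => t ^ a * ((x + t) ^ c)⁻¹) (Ioi 0) := by
  rw [← Ioc_union_Ioi_eq_Ioi hx.le]
  apply IntegrableOn.union
  · exact ((contOn_aux x a c (fun t ht => by have := ht.1; linarith)).integrableOn_compact
      isCompact_Icc).mono_set Ioc_subset_Icc_self
  · have hlt : ((a : ℝ) - c) < -1 := by
      have : (a : ℝ) + 2 ≤ c := by exact_mod_cast hc
      linarith
    apply Integrable.mono (integrableOn_Ioi_rpow_of_lt hlt hx)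
    · exact (contOn_aux x a c (fun t ht => by have : x < t := ht; linarith)).aestronglyMeasurable
        measurableSet_Ioi
    · filter_upwards [ae_restrict_mem measurableSet_Ioi] with t ht
      have htpos : (0 : ℝ) < t := hx.trans ht
      have hxt : (0 : ℝ) < x + t := by linarith
      rw [Real.norm_eq_abs, Real.norm_eq_abs, abs_of_pos (by positivity),
        abs_of_pos (Real.rpow_pos_of_pos htpos _), Real.rpow_sub htpos,
        Real.rpow_natCast, Real.rpow_natCast]
      rw [div_eq_mul_inv]
      gcongr <;> linarith

lemma deriv_aux (x : ℝ) (c : ℕ) (t : ℝ) (hxt : 0 < x + t) :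
    HasDerivAt (fun t : ℝ => -((c : ℝ) + 1)⁻¹ * ((x + t) ^ (c + 1))⁻¹)
      (((x + t) ^ (c + 2))⁻¹) t := by
  have h1 : HasDerivAt (fun t : ℝ => (x + t) ^ (c + 1))
      (((c : ℝ) + 1) * (x + t) ^ c * 1) t := by
    have := ((hasDerivAt_id t).const_add x).fun_pow (c + 1)
    simpa using this
  have h2 := (h1.fun_inv (pow_ne_zero _ hxt.ne')).const_mul (-((c : ℝ) + 1)⁻¹)
  refine h2.congr_deriv ?_
  have hne : (x + t) ≠ 0 := hxt.ne'
  have hc : ((c : ℝ) + 1) ≠ 0 := by positivity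
  field_simp
  ring

lemma tendsto_aux (x : ℝ) (hx : 0 < x) (a c : ℕ) (hac : a + 1 ≤ c) :
    Tendsto (fun t : ℝ => t ^ a * ((x + t) ^ c)⁻¹) atTop (𝓝 0) := by
  apply squeeze_zero' (g := fun t : ℝ => (t ^ (c - a))⁻¹)
  · filter_upwards [eventually_gt_atTop 0] with t ht
    positivity
  · filter_upwards [eventually_gt_atTop 0] with t ht
    have hxt : (0 : ℝ) < x + t := by linarith
    have h1 : t ^ a * t ^ (c - a) = t ^ c := by
      rw [← pow_add, Nat.add_sub_cancel' (by omega)]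
    calc t ^ a * ((x + t) ^ c)⁻¹ ≤ t ^ a * (t ^ a * t ^ (c - a))⁻¹ := by
          gcongr
          · rw [h1]; exact pow_le_pow_left₀ ht.le (by linarith) c
      _ = (t ^ (c - a))⁻¹ := by
          rw [mul_inv, ← mul_assoc, mul_inv_cancel₀ (by positivity), one_mul]
  · apply Tendsto.inv_tendsto_atTop
    exact tendsto_pow_atTop (by omega) 

lemma key_integral (x : ℝ) (hx : 0 < x) : ∀ a b : ℕ,
    ∫ t in Ioi (0 : ℝ), t ^ a * ((x + t) ^ (a + b + 2))⁻¹
      = (a.factorial : ℝ) * b.factorial / (a + b + 1).factorial / x ^ (b + 1) := by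
  intro a
  induction a with
  | zero =>
    intro b
    have hF : ∀ t ∈ Ioi (0:ℝ), HasDerivAt (fun t : ℝ => -((b : ℝ) + 1)⁻¹ * ((x + t) ^ (b + 1))⁻¹)
        (((x + t) ^ (b + 2))⁻¹) t := fun t ht => deriv_aux x b t (by have : (0:ℝ) < t := ht; linarith)
    have hint : IntegrableOn (fun t : ℝ => ((x + t) ^ (b + 2))⁻¹) (Ioi 0) := by
      have := integrable_aux x hx 0 (b + 2) (by omega)
      simpa using this
    have hcont : ContinuousWithinAt (fun t : ℝ => -((b : ℝ) + 1)⁻¹ * ((x + t) ^ (b + 1))⁻¹)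
        (Ici 0) 0 := by
      apply ContinuousAt.continuousWithinAt
      have : ContinuousAt (fun t : ℝ => (x + t) ^ (b + 1)) 0 := by fun_prop
      exact (continuousAt_const.mul (this.inv₀ (by positivity)))
    have htop : Tendsto (fun t : ℝ => -((b : ℝ) + 1)⁻¹ * ((x + t) ^ (b + 1))⁻¹) atTop (𝓝 0) := by
      have h0 := tendsto_aux x hx 0 (b + 1) (by omega)
      simp only [pow_zero, one_mul] at h0
      simpa using h0.const_mul (-((b : ℝ) + 1)⁻¹)
    have := integral_Ioi_of_hasDerivAt_of_tendsto hcont hF hint htop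
    simp only [add_zero] at this
    rw [show (0:ℕ) + b + 2 = b + 2 by ring]
    simp only [pow_zero, one_mul]
    rw [this]
    have hb1 : ((b:ℝ) + 1) ≠ 0 := by positivity
    have : ((b + 1).factorial : ℝ) = ((b:ℝ) + 1) * b.factorial := by
      rw [Nat.factorial_succ]; push_cast; ring
    rw [show (0:ℕ) + b + 1 = b + 1 by ring, this]
    field_simp
    ring
  | succ a ih =>
    intro b
    -- integration by parts
    set c := a + b + 1 with hc
    have hI := ih b
    have hu : ∀ t ∈ Ioi (0:ℝ), HasDerivAt (fun t : ℝ => t ^ (a + 1))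
        (((a:ℝ) + 1) * t ^ a) t := by
      intro t _
      have := hasDerivAt_pow (a + 1) t
      simpa using this
    have hv : ∀ t ∈ Ioi (0:ℝ), HasDerivAt (fun t : ℝ => -((c : ℝ) + 1)⁻¹ * ((x + t) ^ (c + 1))⁻¹)
        (((x + t) ^ (c + 2))⁻¹) t := fun t ht => deriv_aux x c t (by have : (0:ℝ) < t := ht; linarith)
    have huv' : IntegrableOn (fun t : ℝ => t ^ (a + 1) * ((x + t) ^ (c + 2))⁻¹) (Ioi 0) :=
      integrable_aux x hx (a + 1) (c + 2) (by omega)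
    have hu'v : IntegrableOn
        (fun t : ℝ => ((a:ℝ) + 1) * t ^ a * (-((c : ℝ) + 1)⁻¹ * ((x + t) ^ (c + 1))⁻¹)) (Ioi 0) := by
      have := (integrable_aux x hx a (c + 1) (by omega)).const_mul (((a:ℝ) + 1) * (-((c : ℝ) + 1)⁻¹))
      apply IntegrableOn.congr_fun this (fun t _ => by ring) measurableSet_Ioi
    have h_zero : Tendsto (fun t : ℝ => t ^ (a + 1) * (-((c : ℝ) + 1)⁻¹ * ((x + t) ^ (c + 1))⁻¹))
        (𝓝[>] (0:ℝ)) (𝓝 0) := by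
      have hca : ContinuousAt (fun t : ℝ => t ^ (a + 1) * (-((c : ℝ) + 1)⁻¹ * ((x + t) ^ (c + 1))⁻¹)) 0 := by
        have h1 : ContinuousAt (fun t : ℝ => (x + t) ^ (c + 1)) 0 := by fun_prop
        exact (continuousAt_pow _ _).mul (continuousAt_const.mul (h1.inv₀ (by positivity)))
      have := hca.continuousWithinAt (s := Ioi 0)
      simpa [ContinuousWithinAt, zero_pow (Nat.succ_ne_zero a)] using this
    have h_infty : Tendsto (fun t : ℝ => t ^ (a + 1) * (-((c : ℝ) + 1)⁻¹ * ((x + t) ^ (c + 1))⁻¹))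
        atTop (𝓝 0) := by
      have h0 := tendsto_aux x hx (a + 1) (c + 1) (by omega)
      have := h0.const_mul (-((c : ℝ) + 1)⁻¹)
      rw [mul_zero] at this
      apply this.congr
      intro t; ring
    have hparts := integral_Ioi_mul_deriv_eq_deriv_mul hu hv
      (by simpa [Pi.mul_def] using huv') (by simpa [Pi.mul_def] using hu'v) h_zero h_infty
    -- hparts : ∫ t in Ioi 0, t^(a+1) * ((x+t)^(c+2))⁻¹ = 0 - 0 - ∫ t in Ioi 0, (a+1) t^a * (-(c+1)⁻¹ (x+t)^(c+1)⁻¹)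
    have hrw : ∫ t in Ioi (0:ℝ), ((a:ℝ) + 1) * t ^ a * (-((c : ℝ) + 1)⁻¹ * ((x + t) ^ (c + 1))⁻¹)
        = (((a:ℝ) + 1) * (-((c : ℝ) + 1)⁻¹)) * ∫ t in Ioi (0:ℝ), t ^ a * ((x + t) ^ (a + b + 2))⁻¹ := by
      rw [← integral_const_mul]
      apply setIntegral_congr_fun measurableSet_Ioi
      intro t _
      have : c + 1 = a + b + 2 := by omega
      rw [this]
      ring
    rw [show a + 1 + b + 2 = c + 2 by omega]
    rw [hparts, hrw, hI]
    have hfac1 : ((a + 1).factorial : ℝ) = ((a:ℝ) + 1) * a.factorial := by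
      rw [Nat.factorial_succ]; push_cast; ring
    have hfac2 : ((a + 1 + b + 1).factorial : ℝ) = ((c:ℝ) + 1) * (a + b + 1).factorial := by
      rw [show a + 1 + b + 1 = (a + b + 1) + 1 by omega, Nat.factorial_succ]
      push_cast [hc]; ring
    rw [hfac1, hfac2]
    have hc1 : ((c:ℝ) + 1) ≠ 0 := by positivity
    have hfa : (a.factorial : ℝ) ≠ 0 := Nat.cast_ne_zero.2 a.factorial_ne_zero
    have hfab : ((a + b + 1).factorial : ℝ) ≠ 0 := Nat.cast_ne_zero.2 (a + b + 1).factorial_ne_zero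
    field_simp
    ring
/-- Monomial moments of the Gamma-type operator:
`M_{n,k}(e_m;x) = ((n−k+m)!·(n−m)!)/((n−k)!·n!)·x^m`. -/
theorem Mnk_monomial (k n m : ℕ) (hk : 1 ≤ k) (hkn : k ≤ n) (hm : m ≤ n - k)
    (x : ℝ) (hx : 0 < x) :
    Mnk n k (fun t => t ^ m) x =
      (((n - k + m).factorial : ℝ) * ((n - m).factorial : ℝ)) /
        (((n - k).factorial : ℝ) * (n.factorial : ℝ)) * x ^ m := by
  have hxne : x ≠ 0 := hx.ne'
  set a := n - k + m with ha
  set b := n - m with hb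
  have h1 : 2 * n - k + 2 = a + b + 2 := by omega
  have h2 : 2 * n - k + 1 = a + b + 1 := by omega
  have hint : ∫ t in Ioi (0 : ℝ), t ^ (n - k) / (x + t) ^ (2 * n - k + 2) * t ^ m
      = ∫ t in Ioi (0 : ℝ), t ^ a * ((x + t) ^ (a + b + 2))⁻¹ := by
    apply setIntegral_congr_fun measurableSet_Ioi
    intro t _
    rw [h1, ha]
    simp only [pow_add, div_eq_mul_inv]
    ring
  rw [Mnk, hint, key_integral x hx a b, h2]
  have hpow : x ^ (n + 1) = x ^ (b + 1) * x ^ m := by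
    rw [← pow_add]; congr 1; omega
  have hfn : ((n.factorial : ℝ)) ≠ 0 := Nat.cast_ne_zero.2 n.factorial_ne_zero
  have hfnk : (((n - k).factorial : ℝ)) ≠ 0 := Nat.cast_ne_zero.2 (n - k).factorial_ne_zero
  have hfab : (((a + b + 1).factorial : ℝ)) ≠ 0 := Nat.cast_ne_zero.2 (a + b + 1).factorial_ne_zero
  rw [hpow]
  field_simp
end

section
/- Let k, n, m be integers with k ≥ 1, n ≥ k, 0 ≤ m ≤ n − k and n ≥ m. Then for every fixed x > 0, M_{n,k}(φ_{x,m}; x) = ( Σ_{j=0}^{m} (−1)^j · C(m,j) · ((n−m+j)!·(n−k+m−j)!)/(n!·(n−k)!) ) · x^m, where φ_{x,m}(t) = (t−x)^m and C(m,j) is the binomial coefficient. -/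
open MeasureTheory Set

section helpers
open Filter Topology


lemma myCont (a b : ℕ) (x : ℝ) (hx : 0 < x) :
    ContinuousOn (fun t : ℝ => t ^ a / (x + t) ^ b) (Ici 0) := by
  apply ContinuousOn.div (continuous_pow a).continuousOn
  · exact (Continuous.pow (by continuity) b).continuousOn
  · intro t ht
    exact pow_ne_zero _ (by have : (0:ℝ) ≤ t := ht; positivity)

lemma myInt (a b : ℕ) (hab : a + 2 ≤ b) (x : ℝ) (hx : 0 < x) :
    IntegrableOn (fun t : ℝ => t ^ a / (x + t) ^ b) (Ioi 0) := by
  have hcont := myCont a b x hx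
  rw [← Ioc_union_Ioi_eq_Ioi (zero_le_one (α := ℝ))]
  refine IntegrableOn.union ?_ ?_
  · exact ((hcont.mono (Icc_subset_Ici_self)).integrableOn_Icc).mono_set Ioc_subset_Icc_self
  · have hexp : (-(((b : ℝ) - a))) < -1 := by
      have : (a:ℝ) + 2 ≤ b := by exact_mod_cast hab
      linarith
    apply Integrable.mono' (g := fun t : ℝ => t ^ (-(((b : ℝ) - a))))
    · exact integrableOn_Ioi_rpow_of_lt hexp one_pos
    · exact (hcont.mono (fun t ht => mem_Ici.mpr (le_of_lt (lt_of_lt_of_le one_pos (mem_Ioi.mp ht).le)) : Ioi (1:ℝ) ⊆ Ici 0)).aestronglyMeasurable measurableSet_Ioi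
    · filter_upwards [ae_restrict_mem measurableSet_Ioi] with t ht
      have ht0 : (0:ℝ) < t := lt_trans one_pos ht
      have hxt : (0:ℝ) < x + t := by positivity
      rw [Real.norm_eq_abs, abs_of_nonneg (by positivity)]
      have h1 : t ^ a / (x + t) ^ b ≤ t ^ a / t ^ b := by
        apply div_le_div_of_nonneg_left (by positivity) (by positivity)
        exact pow_le_pow_left₀ ht0.le (by linarith) b
      refine h1.trans_eq ?_
      rw [← Real.rpow_natCast t a, ← Real.rpow_natCast t b, ← Real.rpow_sub ht0]
      ring_nf


lemma hasDeriv_addpow (q : ℕ) (x t : ℝ) :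
    HasDerivAt (fun s : ℝ => (x + s) ^ (q + 1)) ((q + 1) * (x + t) ^ q) t := by
  have h : HasDerivAt (fun s : ℝ => x + s) 1 t := (hasDerivAt_id t).const_add x
  simpa using h.fun_pow (q + 1)

lemma hasDeriv_G (p q : ℕ) (x t : ℝ) (h : x + t ≠ 0) :
    HasDerivAt (fun s : ℝ => s ^ (p + 1) / (x + s) ^ (q + 1))
      ((p + 1) * t ^ p / (x + t) ^ (q + 1) - (q + 1) * t ^ (p + 1) / (x + t) ^ (q + 2)) t := by
  have h1 : HasDerivAt (fun s : ℝ => s ^ (p + 1)) ((p + 1) * t ^ p) t := by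
    simpa using hasDerivAt_pow (p + 1) t
  have := h1.fun_div (hasDeriv_addpow q x t) (pow_ne_zero _ h)
  refine this.congr_deriv ?_
  field_simp
  ring

lemma hasDeriv_invpow (q : ℕ) (x t : ℝ) (h : x + t ≠ 0) :
    HasDerivAt (fun s : ℝ => ((x + s) ^ (q + 1))⁻¹) (-((q + 1) / (x + t) ^ (q + 2))) t := by
  have := (hasDeriv_addpow q x t).fun_inv (pow_ne_zero _ h)
  refine this.congr_deriv ?_
  field_simp
  ring

lemma myTendsto (a b : ℕ) (hab : a < b) (x : ℝ) (hx : 0 < x) :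
    Tendsto (fun t : ℝ => t ^ a / (x + t) ^ b) atTop (𝓝 0) := by
  have hy : (0:ℝ) < (b:ℝ) - a := by
    have : (a:ℝ) < b := by exact_mod_cast hab
    linarith
  apply tendsto_of_tendsto_of_tendsto_of_le_of_le' tendsto_const_nhds
    (tendsto_rpow_neg_atTop hy)
  · filter_upwards [eventually_gt_atTop (0:ℝ)] with t ht
    positivity
  · filter_upwards [eventually_gt_atTop (0:ℝ)] with t ht
    have hxt : (0:ℝ) < x + t := by positivity
    have h1 : t ^ a / (x + t) ^ b ≤ t ^ a / t ^ b := by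
      apply div_le_div_of_nonneg_left (by positivity) (by positivity)
      exact pow_le_pow_left₀ ht.le (by linarith) b
    refine h1.trans_eq ?_
    rw [← Real.rpow_natCast t a, ← Real.rpow_natCast t b, ← Real.rpow_sub ht]
    ring_nf
lemma integral_val (c : ℕ) (x : ℝ) (hx : 0 < x) : ∀ a : ℕ,
    ∫ t in Ioi (0:ℝ), t ^ a / (x + t) ^ (a + c + 2) =
      ((a.factorial : ℝ) * (c.factorial : ℝ) / ((a + c + 1).factorial : ℝ)) / x ^ (c + 1) := by
  intro a
  induction a with
  | zero =>
    have key : ∫ t in Ioi (0:ℝ), t ^ 0 / (x + t) ^ (0 + c + 2) =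
        0 - (-(((c:ℝ) + 1)⁻¹ * ((x + 0) ^ (c + 1))⁻¹)) := by
      apply integral_Ioi_of_hasDerivAt_of_tendsto'
        (f := fun s : ℝ => -(((c:ℝ) + 1)⁻¹ * ((x + s) ^ (c + 1))⁻¹))
      · intro t ht
        have hxt : x + t ≠ 0 := by have : (0:ℝ) ≤ t := ht; positivity
        have := ((hasDeriv_invpow c x t hxt).const_mul (((c:ℝ) + 1)⁻¹)).fun_neg
        convert this using 1
        have hc1 : ((c:ℝ) + 1) ≠ 0 := by positivity
        field_simp
        ring
      · exact (myInt 0 (0 + c + 2) (by omega) x hx)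
      · have h0 := myTendsto 0 (c + 1) (by omega) x hx
        have h1 : Tendsto (fun t : ℝ => ((x + t) ^ (c + 1))⁻¹) atTop (𝓝 0) := by
          simpa [one_div] using h0
        simpa using (h1.const_mul (((c:ℝ) + 1)⁻¹)).neg
    rw [key]
    have hc1 : ((c:ℝ) + 1) ≠ 0 := by positivity
    have hfc : ((c.factorial : ℝ)) ≠ 0 := by exact_mod_cast c.factorial_ne_zero
    have hx1 : x ^ (c + 1) ≠ 0 := by positivity
    rw [show (0 + c + 1) = c + 1 by omega, Nat.factorial_succ]
    push_cast
    field_simp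
    ring
  | succ a ih =>
    have hq : a + 1 + c + 2 = (a + c + 1) + 2 := by omega
    have hden : ((a:ℝ) + c + 2) ≠ 0 := by positivity
    have key : ∫ t in Ioi (0:ℝ),
        (t ^ (a + 1) / (x + t) ^ (a + 1 + c + 2)
          - ((a:ℝ) + 1) / ((a:ℝ) + c + 2) * (t ^ a / (x + t) ^ (a + c + 2))) =
        0 - (-(((a:ℝ) + c + 2)⁻¹ * ((0:ℝ) ^ (a + 1) / (x + 0) ^ (a + c + 2)))) := by
      apply integral_Ioi_of_hasDerivAt_of_tendsto'
        (f := fun s : ℝ => -(((a:ℝ) + c + 2)⁻¹ * (s ^ (a + 1) / (x + s) ^ (a + c + 2))))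
      · intro t ht
        have hxt : x + t ≠ 0 := by have : (0:ℝ) ≤ t := ht; positivity
        have := ((hasDeriv_G a (a + c + 1) x t hxt).const_mul (((a:ℝ) + c + 2)⁻¹)).fun_neg
        rw [show a + c + 1 + 1 = a + c + 2 by omega, show a + c + 1 + 2 = a + 1 + c + 2 by omega] at this
        convert this using 1
        push_cast
        field_simp
        ring
      · apply Integrable.sub
        · exact myInt (a + 1) (a + 1 + c + 2) (by omega) x hx
        · exact (myInt a (a + c + 2) (by omega) x hx).const_mul _
      · have h1 := myTendsto (a + 1) (a + c + 2) (by omega) x hx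
        simpa using (h1.const_mul (((a:ℝ) + c + 2)⁻¹)).neg
    rw [integral_sub (myInt (a + 1) (a + 1 + c + 2) (by omega) x hx)
      ((myInt a (a + c + 2) (by omega) x hx).const_mul _), integral_const_mul, ih] at key
    simp only [zero_pow (Nat.succ_ne_zero a), zero_div, mul_zero, neg_zero, sub_zero,
      sub_eq_zero] at key
    rw [key]
    have hfac : (((a + 1) + c + 1).factorial : ℝ) = ((a:ℝ) + c + 2) * ((a + c + 1).factorial : ℝ) := by
      rw [show (a + 1) + c + 1 = (a + c + 1) + 1 by omega, Nat.factorial_succ]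
      push_cast; ring
    have hfac2 : (((a + 1).factorial : ℝ)) = ((a:ℝ) + 1) * (a.factorial : ℝ) := by
      rw [Nat.factorial_succ]; push_cast; ring
    rw [hfac, hfac2]
    have h1 : ((a + c + 1).factorial : ℝ) ≠ 0 := by exact_mod_cast (a + c + 1).factorial_ne_zero
    have hx1 : x ^ (c + 1) ≠ 0 := by positivity
    field_simp

end helpers

/-- Central moments of the Gamma-type operator as an alternating sum. -/
theorem Mnk_central_moment_sum (k n m : ℕ) (hk : 1 ≤ k) (hkn : k ≤ n)
    (hm : m ≤ n - k) (hmn : m ≤ n) (x : ℝ) (hx : 0 < x) :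
    Mnk n k (fun t => (t - x) ^ m) x =
      (∑ j ∈ Finset.range (m + 1),
          (-1 : ℝ) ^ j * (m.choose j : ℝ) *
            (((n - m + j).factorial : ℝ) * ((n - k + m - j).factorial : ℝ)) /
              ((n.factorial : ℝ) * ((n - k).factorial : ℝ))) * x ^ m := by
  have hx' : x ≠ 0 := ne_of_gt hx
  have hint : (fun t : ℝ => t ^ (n - k) / (x + t) ^ (2 * n - k + 2) * (t - x) ^ m) =
      fun t : ℝ => ∑ i ∈ Finset.range (m + 1),
        ((-1 : ℝ) ^ (i + m) * x ^ (m - i) * (m.choose i : ℝ)) *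
          (t ^ ((n - k) + i) / (x + t) ^ (2 * n - k + 2)) := by
    funext t
    rw [sub_pow, Finset.mul_sum]
    refine Finset.sum_congr rfl fun i hi => ?_
    rw [pow_add]
    ring
  unfold Mnk
  simp only [hint]
  rw [integral_finset_sum _ (fun i hi => by
    exact ((myInt ((n - k) + i) (2 * n - k + 2)
      (by rw [Finset.mem_range] at hi; omega) x hx).const_mul _))]
  simp only [integral_const_mul]
  rw [← Finset.sum_range_reflect (fun j => (-1 : ℝ) ^ j * (m.choose j : ℝ) *
      (((n - m + j).factorial : ℝ) * ((n - k + m - j).factorial : ℝ)) /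
        ((n.factorial : ℝ) * ((n - k).factorial : ℝ))) (m + 1)]
  rw [Finset.sum_mul, Finset.mul_sum]
  refine Finset.sum_congr rfl fun i hi => ?_
  rw [Finset.mem_range] at hi
  have him : i ≤ m := by omega
  have hek : (n - k) + i + (n - i) + 2 = 2 * n - k + 2 := by omega
  rw [← hek, integral_val (n - i) x hx ((n - k) + i)]
  rw [show m + 1 - 1 - i = m - i from by omega]
  rw [show n - m + (m - i) = n - i from by omega,
      show n - k + m - (m - i) = n - k + i from by omega,
      Nat.choose_symm him]
  rw [show (n - k) + i + (n - i) + 1 = 2 * n - k + 1 from by omega]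
  have hsgn : (-1 : ℝ) ^ (m - i) = (-1 : ℝ) ^ (i + m) := by
    rw [show i + m = (m - i) + 2 * i from by omega, pow_add, pow_mul]
    norm_num
  rw [hsgn]
  have hxp : x ^ (n + 1) = x ^ (n - i + 1) * x ^ i := by
    rw [← pow_add]; congr 1; omega
  have hxp2 : x ^ i * x ^ (m - i) = x ^ m := by
    rw [← pow_add]; congr 1; omega
  have h1 : ((2 * n - k + 1).factorial : ℝ) ≠ 0 := by
    exact_mod_cast (2 * n - k + 1).factorial_ne_zero
  have h2 : ((n.factorial : ℝ)) ≠ 0 := by exact_mod_cast n.factorial_ne_zero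
  have h3 : (((n - k).factorial : ℝ)) ≠ 0 := by exact_mod_cast (n - k).factorial_ne_zero
  have h4 : x ^ (n - i + 1) ≠ 0 := by positivity
  rw [hxp]
  field_simp
  linear_combination (m.choose i : ℝ) * hxp2
end

section
/- Let k, n be integers with k ≥ 1 and n ≥ k + 1. Then for every x > 0, the first central moment of the Gamma-type operator satisfies M_{n,k}(φ_{x,1}; x) = ((1−k)/n)·x. -/
open MeasureTheory Set

lemma Jbase (x : ℝ) (hx : 0 < x) (M : ℕ) (hM : 2 ≤ M) :
    IntegrableOn (fun t : ℝ => 1 / (x + t) ^ M) (Ioi 0) ∧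
    ∫ t in Ioi (0 : ℝ), 1 / (x + t) ^ M =
      x / (((M : ℝ) - 1) * x ^ M) := by
  have hM1 : (-(M : ℝ)) < -1 := by
    have : (2 : ℝ) ≤ M := by exact_mod_cast hM
    linarith
  have hemb : MeasurableEmbedding (fun t : ℝ => t + x) :=
    (MeasurableEquiv.addRight x).measurableEmbedding
  have hmp : MeasurePreserving (fun t : ℝ => t + x) volume volume :=
    measurePreserving_add_right volume x
  have hpre : (fun t : ℝ => t + x) ⁻¹' Ioi x = Ioi 0 := by
    ext t; simp [lt_add_iff_pos_left]
  have heq : ∀ t ∈ Ioi (0 : ℝ), (t + x) ^ (-(M : ℝ)) = 1 / (x + t) ^ M := by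
    intro t ht
    have hpos : (0 : ℝ) < t + x := by simp at ht; linarith
    rw [Real.rpow_neg hpos.le, Real.rpow_natCast, one_div, add_comm t x]
  constructor
  · have h1 : IntegrableOn (fun t : ℝ => t ^ (-(M : ℝ))) (Ioi x) :=
      integrableOn_Ioi_rpow_of_lt hM1 hx
    have h2 := (hmp.integrableOn_comp_preimage hemb
      (f := fun t : ℝ => t ^ (-(M : ℝ))) (s := Ioi x)).mpr h1
    rw [hpre] at h2
    exact h2.congr_fun heq measurableSet_Ioi
  · have h3 : ∫ t in Ioi (0 : ℝ), (t + x) ^ (-(M : ℝ)) =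
        ∫ t in Ioi x, t ^ (-(M : ℝ)) := by
      rw [← hpre]
      exact hmp.setIntegral_preimage_emb hemb (fun t : ℝ => t ^ (-(M : ℝ))) (Ioi x)
    rw [← setIntegral_congr_fun measurableSet_Ioi heq, h3,
      integral_Ioi_rpow_of_lt hM1 hx]
    have hxM : x ^ (-(M : ℝ) + 1) = x / x ^ M := by
      rw [Real.rpow_add hx, Real.rpow_neg hx.le, Real.rpow_natCast, Real.rpow_one]
      ring
    rw [hxM]
    have h2M : (2 : ℝ) ≤ M := by exact_mod_cast hM
    have hd1 : x ^ M * (-(M : ℝ) + 1) ≠ 0 :=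
      mul_ne_zero (by positivity) (by linarith)
    have hd2 : ((M : ℝ) - 1) * x ^ M ≠ 0 :=
      mul_ne_zero (by linarith) (by positivity)
    rw [← neg_div, div_div, div_eq_div_iff hd1 hd2]
    ring

lemma Jkey (x : ℝ) (hx : 0 < x) : ∀ (m M : ℕ), m + 2 ≤ M →
    IntegrableOn (fun t : ℝ => t ^ m / (x + t) ^ M) (Ioi 0) ∧
    ∫ t in Ioi (0 : ℝ), t ^ m / (x + t) ^ M =
      ((m.factorial : ℝ) * ((M - m - 2).factorial : ℝ) * x ^ (m + 1)) /
        (((M - 1).factorial : ℝ) * x ^ M) := by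
  intro m
  induction m with
  | zero =>
    intro M hM
    obtain ⟨h1, h2⟩ := Jbase x hx M (by omega)
    constructor
    · exact h1.congr_fun (fun t ht => by simp) measurableSet_Ioi
    · have h0 : ∫ t in Ioi (0 : ℝ), t ^ 0 / (x + t) ^ M
          = ∫ t in Ioi (0 : ℝ), 1 / (x + t) ^ M := by
        apply setIntegral_congr_fun measurableSet_Ioi
        intro t ht; simp
      rw [h0, h2]
      obtain ⟨a, rfl⟩ : ∃ a, M = a + 2 := ⟨M - 2, by omega⟩
      have e1 : a + 2 - 0 - 2 = a := by omega
      have e2 : a + 2 - 1 = a + 1 := by omega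
      rw [e1, e2, Nat.factorial_succ, Nat.factorial_zero]
      have hfa : ((a.factorial : ℝ)) ≠ 0 := by positivity
      have ha2 : (0 : ℝ) < (a : ℝ) + 2 - 1 := by
        have := Nat.cast_nonneg (α := ℝ) a; linarith
      have hd1 : ((a : ℝ) + 2 - 1) * x ^ (a + 2) ≠ 0 :=
        mul_ne_zero ha2.ne' (by positivity)
      have hd2 : ((((a : ℕ) + 1) * a.factorial : ℕ) : ℝ) * x ^ (a + 2) ≠ 0 := by
        apply mul_ne_zero (by positivity) (by positivity)
      push_cast at hd1 hd2 ⊢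
      rw [div_eq_div_iff hd1 hd2]
      ring
  | succ m ih =>
    intro M hM
    obtain ⟨i1, v1⟩ := ih (M - 1) (by omega)
    obtain ⟨i2, v2⟩ := ih M (by omega)
    have heq : ∀ t ∈ Ioi (0 : ℝ),
        t ^ m / (x + t) ^ (M - 1) - x * (t ^ m / (x + t) ^ M)
          = t ^ (m + 1) / (x + t) ^ M := by
      intro t ht
      simp only [mem_Ioi] at ht
      have hpos : (0 : ℝ) < x + t := by linarith
      have hMs : (x + t) ^ M = (x + t) * (x + t) ^ (M - 1) := by
        rw [← pow_succ']
        congr 1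
        omega
      rw [hMs]
      field_simp
      ring
    have hint : IntegrableOn
        (fun t : ℝ => t ^ m / (x + t) ^ (M - 1) - x * (t ^ m / (x + t) ^ M)) (Ioi 0) :=
      i1.sub (i2.const_mul x)
    constructor
    · exact hint.congr_fun heq measurableSet_Ioi
    · rw [← setIntegral_congr_fun measurableSet_Ioi heq,
        integral_sub i1 (i2.const_mul x), MeasureTheory.integral_const_mul, v1, v2]
      obtain ⟨a, rfl⟩ : ∃ a, M = m + 3 + a := ⟨M - (m + 3), by omega⟩
      have e1 : m + 3 + a - 1 - m - 2 = a := by omega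
      have e2 : m + 3 + a - 1 - 1 = m + 1 + a := by omega
      have e3 : m + 3 + a - 1 = m + 2 + a := by omega
      have e4 : m + 3 + a - m - 2 = a + 1 := by omega
      have e5 : m + 3 + a - (m + 1) - 2 = a := by omega
      rw [e1, e2, e3, e4, e5]
      have f1 : (m + 2 + a).factorial = (m + 2 + a) * (m + 1 + a).factorial := by
        rw [show m + 2 + a = (m + 1 + a) + 1 by omega, Nat.factorial_succ]
      have f2 : (a + 1).factorial = (a + 1) * a.factorial := Nat.factorial_succ a
      have f3 : (m + 1).factorial = (m + 1) * m.factorial := Nat.factorial_succ m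
      have f4 : x ^ (m + 3 + a) = x * x ^ (m + 2 + a) := by
        rw [show m + 3 + a = (m + 2 + a) + 1 by omega, pow_succ]; ring
      have f5 : x ^ (m + 1 + 1) = x * x ^ (m + 1) := by rw [pow_succ]; ring
      rw [f1, f2, f3, f4, f5]
      have hq1 : ((m + 1 + a).factorial : ℝ) * x ^ (m + 2 + a) ≠ 0 :=
        mul_ne_zero (by positivity) (by positivity)
      have hq2 : (((m + 2 + a) * (m + 1 + a).factorial : ℕ) : ℝ) * (x * x ^ (m + 2 + a)) ≠ 0 :=
        mul_ne_zero (by positivity) (by positivity)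
      push_cast at hq1 hq2 ⊢
      rw [mul_div_assoc', div_sub_div _ _ hq1 hq2, div_eq_div_iff (mul_ne_zero hq1 hq2) hq2]
      ring

/-- First central moment: `M_{n,k}(φ_{x,1};x) = ((1−k)/n)·x`. -/
theorem Mnk_central_moment_one (k n : ℕ) (hk : 1 ≤ k) (hn : k + 1 ≤ n)
    (x : ℝ) (hx : 0 < x) :
    Mnk n k (fun t => (t - x) ^ 1) x = (1 - (k : ℝ)) / (n : ℝ) * x := by
  obtain ⟨b, rfl⟩ : ∃ b, n = k + 1 + b := ⟨n - (k + 1), by omega⟩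
  have d1 : k + 1 + b - k = b + 1 := by omega
  have d2 : 2 * (k + 1 + b) - k + 1 = k + 2 * b + 3 := by omega
  have d3 : 2 * (k + 1 + b) - k + 2 = k + 2 * b + 4 := by omega
  rw [Mnk]
  simp only [d1, d2, d3, pow_one]
  obtain ⟨I1, V1⟩ := Jkey x hx (b + 2) (k + 2 * b + 4) (by omega)
  obtain ⟨I0, V0⟩ := Jkey x hx (b + 1) (k + 2 * b + 4) (by omega)
  have hId : ∀ t : ℝ, t ^ (b + 1) / (x + t) ^ (k + 2 * b + 4) * (t - x)
      = t ^ (b + 2) / (x + t) ^ (k + 2 * b + 4)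
        - x * (t ^ (b + 1) / (x + t) ^ (k + 2 * b + 4)) := by
    intro t
    rw [show b + 2 = b + 1 + 1 from rfl, pow_succ]
    ring
  simp only [hId]
  rw [integral_sub I1 (I0.const_mul x), MeasureTheory.integral_const_mul, V1, V0]
  have g1 : k + 2 * b + 4 - (b + 2) - 2 = k + b := by omega
  have g2 : k + 2 * b + 4 - (b + 1) - 2 = k + b + 1 := by omega
  have g3 : k + 2 * b + 4 - 1 = k + 2 * b + 3 := by omega
  rw [g1, g2, g3]
  have F1 : (b + 2).factorial = (b + 2) * (b + 1).factorial := Nat.factorial_succ (b + 1)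
  have F2 : (k + b + 1).factorial = (k + b + 1) * (k + b).factorial := Nat.factorial_succ _
  have F3 : (k + 1 + b).factorial = (k + b + 1) * (k + b).factorial := by
    rw [show k + 1 + b = (k + b) + 1 by omega, Nat.factorial_succ]
  have F4 : x ^ (k + 2 * b + 4) = x ^ (k + 1 + b + 1) * x ^ (b + 2) := by
    rw [← pow_add]; congr 1; omega
  have F5 : x ^ (b + 2 + 1) = x ^ (b + 2) * x := pow_succ x (b + 2)
  have F6 : x ^ (b + 1 + 1) = x ^ (b + 2) := by norm_num
  rw [F1, F2, F3, F4, F5, F6]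
  have hQ : ((k + 2 * b + 3).factorial : ℝ) * (x ^ (k + 1 + b + 1) * x ^ (b + 2)) ≠ 0 :=
    mul_ne_zero (by positivity) (by positivity)
  have hD : (((k + b + 1 : ℕ) * (k + b).factorial : ℕ) : ℝ) * ((b + 1).factorial : ℝ) ≠ 0 := by
    apply mul_ne_zero _ (by positivity)
    push_cast
    positivity
  have hn' : ((k + 1 + b : ℕ) : ℝ) ≠ 0 := Nat.cast_ne_zero.mpr (by omega)
  rw [mul_div_assoc' x, div_sub_div_same, div_mul_div_comm, div_mul_eq_mul_div,
    div_eq_div_iff (mul_ne_zero (by push_cast; positivity) hQ) hn']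
  push_cast
  ring
end

section
/- Let k, n be integers with k ≥ 1 and n ≥ k + 2. Then for every x > 0, the second central moment of the Gamma-type operator satisfies M_{n,k}(φ_{x,2}; x) = ((k² − 5k + 2n + 4)/(n(n−1)))·x². -/
open MeasureTheory Set

open Filter Topology

lemma tendsto0 {x : ℝ} (hx : 0 < x) (A B : ℕ) (h : A < B) :
    Tendsto (fun t : ℝ => t ^ A / (x + t) ^ B) atTop (𝓝 0) := by
  have hb : Tendsto (fun t : ℝ => t⁻¹) atTop (𝓝 0) := tendsto_inv_atTop_zero
  apply squeeze_zero' ?_ ?_ hb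
  · filter_upwards [eventually_ge_atTop (0:ℝ)] with t ht
    positivity
  · filter_upwards [eventually_ge_atTop (max x 1)] with t ht
    have ht1 : (1:ℝ) ≤ t := le_trans (le_max_right _ _) ht
    have htx : x ≤ t := le_trans (le_max_left _ _) ht
    have ht0 : (0:ℝ) < t := lt_of_lt_of_le one_pos ht1
    have h1 : t ^ B ≤ (x + t) ^ B := by
      apply pow_le_pow_left₀ ht0.le; linarith
    have h2 : t ^ A / (x + t) ^ B ≤ t ^ A / t ^ B :=
      div_le_div_of_nonneg_left (by positivity) (by positivity) h1
    refine h2.trans ?_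
    have hB : t ^ B = t ^ A * t ^ (B - A) := by
      rw [← pow_add]
      congr 1
      omega
    rw [hB, div_mul_eq_div_div, div_self (by positivity), one_div]
    apply inv_anti₀ ht0
    exact le_self_pow₀ ht1 (by omega)

lemma contOn {x : ℝ} (hx : 0 < x) (A B : ℕ) :
    ContinuousOn (fun t : ℝ => t ^ A / (x + t) ^ B) (Ioi 0) := by
  apply ContinuousOn.div (by fun_prop) (by fun_prop)
  intro t ht
  have : 0 < x + t := by have := ht.out; linarith
  positivity

lemma base_int {x : ℝ} (hx : 0 < x) (m : ℕ) :
    IntegrableOn (fun t : ℝ => 1 / (x + t) ^ (m + 2)) (Ioi 0) ∧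
      ∫ t in Ioi (0:ℝ), 1 / (x + t) ^ (m + 2) = 1 / ((m + 1) * x ^ (m + 1)) := by
  set g : ℝ → ℝ := fun t => -(1 / (m + 1)) * ((x + t) ^ (m + 1))⁻¹ with hg
  have hpos : ∀ t : ℝ, 0 ≤ t → 0 < x + t := fun t ht => by linarith
  have hderiv : ∀ t ∈ Ioi (0:ℝ), HasDerivAt g (1 / (x + t) ^ (m + 2)) t := by
    intro t ht
    have hxt : (0:ℝ) < x + t := hpos t ht.out.le
    have h1 : HasDerivAt (fun t : ℝ => (x + t) ^ (m + 1))
        ((m + 1) * (x + t) ^ m * 1) t := by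
      simpa using (((hasDerivAt_id t).const_add x).fun_pow (m + 1))
    have h2 := (h1.fun_inv (by positivity)).const_mul (-(1 / ((m : ℝ) + 1)))
    refine h2.congr_deriv ?_
    have e : ((x + t) ^ (m + 1)) ^ 2 = (x + t) ^ (m + 2) * (x + t) ^ m := by
      rw [← pow_mul, ← pow_add]; congr 1; omega
    rw [e]
    field_simp
  have hcont : ContinuousWithinAt g (Ici 0) 0 := by
    apply ContinuousAt.continuousWithinAt
    have : (0:ℝ) < x + 0 := by linarith
    fun_prop (disch := positivity)
  have htend : Tendsto g atTop (𝓝 0) := by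
    have h0 := (tendsto0 hx 0 (m + 1) (by omega)).const_mul (-(1 / ((m:ℝ) + 1)))
    rw [mul_zero] at h0
    apply h0.congr
    intro t; simp [hg, one_div, div_eq_mul_inv]
  have hint : IntegrableOn (fun t : ℝ => 1 / (x + t) ^ (m + 2)) (Ioi 0) :=
    integrableOn_Ioi_deriv_of_nonneg hcont hderiv
      (fun t ht => by have := hpos t ht.out.le; positivity) htend
  refine ⟨hint, ?_⟩
  rw [integral_Ioi_of_hasDerivAt_of_tendsto hcont hderiv hint htend]
  simp only [hg, add_zero]
  have hm : ((m:ℝ) + 1) ≠ 0 := by positivity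
  field_simp
  ring

lemma intA {x : ℝ} (hx : 0 < x) (A m : ℕ) :
    IntegrableOn (fun t : ℝ => t ^ A / (x + t) ^ (A + m + 2)) (Ioi 0) := by
  apply Integrable.mono' (base_int hx m).1
    ((contOn hx A (A + m + 2)).aestronglyMeasurable measurableSet_Ioi)
  filter_upwards [ae_restrict_mem measurableSet_Ioi] with t ht
  have ht0 : (0:ℝ) < t := ht
  have hxt : (0:ℝ) < x + t := by linarith
  rw [Real.norm_eq_abs, abs_of_nonneg (by positivity)]
  have h1 : t ^ A ≤ (x + t) ^ A := pow_le_pow_left₀ ht0.le (by linarith) A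
  have h2 : (x + t) ^ (A + m + 2) = (x + t) ^ A * (x + t) ^ (m + 2) := by
    ring
  rw [h2]
  rw [div_le_div_iff₀ (by positivity) (by positivity)]
  calc t ^ A * (x + t) ^ (m + 2) ≤ (x + t) ^ A * (x + t) ^ (m + 2) := by
        apply mul_le_mul_of_nonneg_right h1 (by positivity)
    _ = 1 * ((x + t) ^ A * (x + t) ^ (m + 2)) := by ring

lemma Jval {x : ℝ} (hx : 0 < x) (A m : ℕ) :
    ∫ t in Ioi (0:ℝ), t ^ A / (x + t) ^ (A + m + 2) =
      (A.factorial : ℝ) * m.factorial / ((A + m + 1).factorial * x ^ (m + 1)) := by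
  induction A with
  | zero =>
    simp only [pow_zero, Nat.zero_add, zero_add, Nat.factorial_zero, Nat.cast_one, one_mul]
    rw [(base_int hx m).2, Nat.factorial_succ]
    have h1 : ((m:ℝ) + 1) ≠ 0 := by positivity
    have h2 : ((m.factorial : ℝ)) ≠ 0 := Nat.cast_ne_zero.mpr m.factorial_ne_zero
    have h3 : x ^ (m+1) ≠ 0 := by positivity
    push_cast
    field_simp
  | succ A ih =>
    have hpos : ∀ t : ℝ, 0 ≤ t → 0 < x + t := fun t ht => by linarith
    set c : ℝ := ((A:ℝ) + 1) / ((A:ℝ) + (m:ℝ) + 2) with hc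
    set f : ℝ → ℝ := fun t => -(1 / ((A:ℝ) + (m:ℝ) + 2)) *
      (t ^ (A+1) * ((x + t) ^ (A + m + 2))⁻¹) with hf
    set f' : ℝ → ℝ := fun t => t ^ (A+1) / (x+t) ^ (A+1+m+2) -
      c * (t ^ A / (x+t) ^ (A+m+2)) with hf'
    have hint' : IntegrableOn f' (Ioi 0) :=
      (intA hx (A+1) m).sub ((intA hx A m).const_mul c)
    have hderiv : ∀ t ∈ Ioi (0:ℝ), HasDerivAt f (f' t) t := by
      intro t ht
      have hxt : (0:ℝ) < x + t := hpos t ht.out.le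
      have h1 := hasDerivAt_pow (A+1) t
      have h2 := ((hasDerivAt_id t).const_add x).fun_pow (A+m+2)
      have hne : (x + id t) ^ (A+m+2) ≠ 0 := pow_ne_zero _ (ne_of_gt hxt)
      have h3 := (h1.fun_mul (h2.fun_inv hne)).const_mul (-(1 / ((A:ℝ)+(m:ℝ)+2)))
      refine h3.congr_deriv ?_
      simp only [hf', hc, id_eq, mul_one, Nat.add_sub_cancel]
      have e1 : A + m + 2 - 1 = A + m + 1 := by omega
      rw [e1]
      have hd : (A:ℝ)+(m:ℝ)+2 ≠ 0 := by positivity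
      push_cast
      field_simp
      ring
    have hcont : ContinuousWithinAt f (Ici 0) 0 := by
      apply ContinuousAt.continuousWithinAt
      have h0 : (0:ℝ) < x + 0 := by linarith
      fun_prop (disch := positivity)
    have htend : Tendsto f atTop (𝓝 0) := by
      have h0 := (tendsto0 hx (A+1) (A+m+2) (by omega)).const_mul
        (-(1 / ((A:ℝ)+(m:ℝ)+2)))
      rw [mul_zero] at h0
      exact h0.congr (fun t => by simp [hf, div_eq_mul_inv])
    have hI : ∫ t in Ioi (0:ℝ), f' t = 0 - f 0 :=
      integral_Ioi_of_hasDerivAt_of_tendsto hcont hderiv hint' htend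
    have hf0 : f 0 = 0 := by simp [hf]
    have key : EqOn (fun t : ℝ => t ^ (A+1) / (x+t) ^ (A+1+m+2))
        (fun t : ℝ => f' t + c * (t ^ A / (x+t) ^ (A+m+2))) (Ioi 0) := by
      intro t ht; simp only [hf']; ring
    rw [setIntegral_congr_fun measurableSet_Ioi key,
      integral_add hint' ((intA hx A m).const_mul c), hI, hf0,
      integral_const_mul, ih]
    have F1 : (((A+1).factorial : ℕ) : ℝ) = ((A:ℝ)+1) * A.factorial := by
      rw [Nat.factorial_succ]; push_cast; ring
    have F2 : (((A+1+m+1).factorial : ℕ) : ℝ) = ((A:ℝ)+(m:ℝ)+2) * (A+m+1).factorial := by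
      rw [show A+1+m+1 = (A+m+1)+1 from by omega, Nat.factorial_succ]; push_cast; ring
    rw [F1, F2]
    simp only [hc]
    have hd : (A:ℝ)+(m:ℝ)+2 ≠ 0 := by positivity
    have n1 : ((A+m+1).factorial : ℝ) ≠ 0 := Nat.cast_ne_zero.mpr (Nat.factorial_ne_zero _)
    have n2 : ((A).factorial : ℝ) ≠ 0 := Nat.cast_ne_zero.mpr (Nat.factorial_ne_zero _)
    have n3 : ((m).factorial : ℝ) ≠ 0 := Nat.cast_ne_zero.mpr (Nat.factorial_ne_zero _)
    have n4 : x ^ (m+1) ≠ 0 := by positivity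
    field_simp
    ring


/-- Second central moment: `M_{n,k}(φ_{x,2};x) = ((k²−5k+2n+4)/(n(n−1)))·x²`. -/
theorem Mnk_central_moment_two (k n : ℕ) (hk : 1 ≤ k) (hn : k + 2 ≤ n)
    (x : ℝ) (hx : 0 < x) :
    Mnk n k (fun t => (t - x) ^ 2) x =
      ((k : ℝ) ^ 2 - 5 * (k : ℝ) + 2 * (n : ℝ) + 4) / ((n : ℝ) * ((n : ℝ) - 1)) * x ^ 2 := by
  obtain ⟨a, rfl⟩ : ∃ a, n = k + a + 2 := ⟨n - k - 2, by omega⟩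
  unfold Mnk
  rw [show k + a + 2 - k = a + 2 from by omega,
    show 2 * (k + a + 2) - k + 2 = k + 2 * a + 6 from by omega,
    show 2 * (k + a + 2) - k + 1 = k + 2 * a + 5 from by omega]
  have key : EqOn (fun t : ℝ => t ^ (a + 2) / (x + t) ^ (k + 2 * a + 6) * (t - x) ^ 2)
      (fun t : ℝ => t ^ (a + 4) / (x + t) ^ (k + 2 * a + 6) +
        (-2 * x) * (t ^ (a + 3) / (x + t) ^ (k + 2 * a + 6)) +
        x ^ 2 * (t ^ (a + 2) / (x + t) ^ (k + 2 * a + 6))) (Ioi 0) := by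
    intro t ht; simp only; ring
  rw [setIntegral_congr_fun measurableSet_Ioi key]
  have i4 : IntegrableOn (fun t : ℝ => t ^ (a + 4) / (x + t) ^ (k + 2 * a + 6)) (Ioi 0) := by
    have := intA hx (a + 4) (k + a)
    rwa [show a + 4 + (k + a) + 2 = k + 2 * a + 6 from by omega] at this
  have i3 : IntegrableOn (fun t : ℝ => t ^ (a + 3) / (x + t) ^ (k + 2 * a + 6)) (Ioi 0) := by
    have := intA hx (a + 3) (k + a + 1)
    rwa [show a + 3 + (k + a + 1) + 2 = k + 2 * a + 6 from by omega] at this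
  have i2 : IntegrableOn (fun t : ℝ => t ^ (a + 2) / (x + t) ^ (k + 2 * a + 6)) (Ioi 0) := by
    have := intA hx (a + 2) (k + a + 2)
    rwa [show a + 2 + (k + a + 2) + 2 = k + 2 * a + 6 from by omega] at this
  have i3' : IntegrableOn (fun t : ℝ => (-2 * x) * (t ^ (a + 3) / (x + t) ^ (k + 2 * a + 6)))
      (Ioi 0) := i3.const_mul _
  have i2' : IntegrableOn (fun t : ℝ => x ^ 2 * (t ^ (a + 2) / (x + t) ^ (k + 2 * a + 6)))
      (Ioi 0) := i2.const_mul _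
  have i43 : IntegrableOn (fun t : ℝ => t ^ (a + 4) / (x + t) ^ (k + 2 * a + 6) +
      (-2 * x) * (t ^ (a + 3) / (x + t) ^ (k + 2 * a + 6))) (Ioi 0) := i4.add i3'
  rw [integral_add i43 i2', integral_add i4 i3', integral_const_mul, integral_const_mul]
  have J4 : ∫ t in Ioi (0:ℝ), t ^ (a + 4) / (x + t) ^ (k + 2 * a + 6) =
      ((a + 4).factorial : ℝ) * (k + a).factorial /
        ((k + 2 * a + 5).factorial * x ^ (k + a + 1)) := by
    have := Jval hx (a + 4) (k + a)
    rwa [show a + 4 + (k + a) + 2 = k + 2 * a + 6 from by omega,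
      show a + 4 + (k + a) + 1 = k + 2 * a + 5 from by omega] at this
  have J3 : ∫ t in Ioi (0:ℝ), t ^ (a + 3) / (x + t) ^ (k + 2 * a + 6) =
      ((a + 3).factorial : ℝ) * (k + a + 1).factorial /
        ((k + 2 * a + 5).factorial * x ^ (k + a + 2)) := by
    have := Jval hx (a + 3) (k + a + 1)
    rwa [show a + 3 + (k + a + 1) + 2 = k + 2 * a + 6 from by omega,
      show a + 3 + (k + a + 1) + 1 = k + 2 * a + 5 from by omega,
      show k + a + 1 + 1 = k + a + 2 from by omega] at this
  have J2 : ∫ t in Ioi (0:ℝ), t ^ (a + 2) / (x + t) ^ (k + 2 * a + 6) =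
      ((a + 2).factorial : ℝ) * (k + a + 2).factorial /
        ((k + 2 * a + 5).factorial * x ^ (k + a + 3)) := by
    have := Jval hx (a + 2) (k + a + 2)
    rwa [show a + 2 + (k + a + 2) + 2 = k + 2 * a + 6 from by omega,
      show a + 2 + (k + a + 2) + 1 = k + 2 * a + 5 from by omega,
      show k + a + 2 + 1 = k + a + 3 from by omega] at this
  rw [J4, J3, J2]
  -- factorial expansions
  have F4 : (((a + 4).factorial : ℕ) : ℝ) = ((a:ℝ) + 4) * ((a:ℝ) + 3) * (a + 2).factorial := by
    rw [show a + 4 = (a + 3) + 1 from by omega, Nat.factorial_succ,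
      show a + 3 = (a + 2) + 1 from by omega, Nat.factorial_succ]
    push_cast; ring
  have F3 : (((a + 3).factorial : ℕ) : ℝ) = ((a:ℝ) + 3) * (a + 2).factorial := by
    rw [show a + 3 = (a + 2) + 1 from by omega, Nat.factorial_succ]; push_cast; ring
  have G2 : (((k + a + 2).factorial : ℕ) : ℝ) =
      ((k:ℝ) + a + 2) * ((k:ℝ) + a + 1) * (k + a).factorial := by
    rw [show k + a + 2 = (k + a + 1) + 1 from by omega, Nat.factorial_succ,
      show k + a + 1 = (k + a) + 1 from by omega, Nat.factorial_succ]
    push_cast; ring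
  have G1 : (((k + a + 1).factorial : ℕ) : ℝ) = ((k:ℝ) + a + 1) * (k + a).factorial := by
    rw [show k + a + 1 = (k + a) + 1 from by omega, Nat.factorial_succ]; push_cast; ring
  rw [F4, F3, G2, G1]
  have n1 : ((k + 2 * a + 5).factorial : ℝ) ≠ 0 := Nat.cast_ne_zero.mpr (Nat.factorial_ne_zero _)
  have n2 : (((a + 2).factorial : ℕ) : ℝ) ≠ 0 := Nat.cast_ne_zero.mpr (Nat.factorial_ne_zero _)
  have n3 : (((k + a).factorial : ℕ) : ℝ) ≠ 0 := Nat.cast_ne_zero.mpr (Nat.factorial_ne_zero _)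
  have n4 : x ≠ 0 := ne_of_gt hx
  have n5 : ((k:ℝ) + a + 2) ≠ 0 := by positivity
  have n6 : ((k:ℝ) + a + 1) ≠ 0 := by positivity
  push_cast
  rw [show ((k:ℝ) + ↑a + 2 - 1) = ((k:ℝ) + ↑a + 1) from by ring]
  field_simp
  ring
end

section
/- Let k ≥ 1 and m ≥ 0 be fixed integers and let x > 0 be fixed. Then there exists a constant C > 0 such that for all integers n ≥ k + m, |M_{n,k}(φ_{x,m}; x)| ≤ C · n^{−⌊(m+1)/2⌋}; that is, M_{n,k}(φ_{x,m}; x) = O(n^{−⌊(m+1)/2⌋}) as n → ∞. -/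
open MeasureTheory Set

section Comb
open Polynomial Finset

lemma killpoly (m : ℕ) : ∀ (p : Polynomial ℝ), p.natDegree < m →
    ∑ j ∈ range (m+1), (-1:ℝ)^j * (m.choose j) * p.eval (j:ℝ) = 0 := by
  induction m with
  | zero => exact fun p hp => absurd hp (Nat.not_lt_zero _)
  | succ m ih =>
    intro p hp
    set w : ℕ → ℝ := fun j => (-1:ℝ)^j * (m.choose j) * p.eval (j:ℝ) with hw
    set A : ℕ → ℝ := fun i => (-1:ℝ)^i * (m.choose i) * p.eval ((i:ℝ)+1) with hA
    have key : ∑ j ∈ range (m+2), (-1:ℝ)^j * ((m+1).choose j) * p.eval (j:ℝ)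
        = ∑ i ∈ range (m+1), (-1:ℝ)^i * (m.choose i) * (p.eval (i:ℝ) - p.eval ((i:ℝ)+1)) := by
      rw [Finset.sum_range_succ' (fun j => (-1:ℝ)^j * ((m+1).choose j) * p.eval (j:ℝ)) (m+1)]
      have h1 : ∀ i ∈ range (m+1),
          (fun j => (-1:ℝ)^j * (((m+1).choose j : ℕ):ℝ) * p.eval (j:ℝ)) (i+1)
          = -(A i) + w (i+1) := by
        intro i _
        simp only [hA, hw, Nat.choose_succ_succ]
        push_cast
        ring
      rw [Finset.sum_congr rfl h1, Finset.sum_add_distrib]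
      have h2 : ∑ i ∈ range (m+1), w (i+1) = ∑ j ∈ range (m+1), w j - w 0 := by
        have h3 := Finset.sum_range_succ' w (m+1)
        have h4 := Finset.sum_range_succ w (m+1)
        have h5 : w (m+1) = 0 := by simp [hw, Nat.choose_succ_self]
        rw [h4, h5, add_zero] at h3
        linarith
      have hR : ∀ i ∈ range (m+1),
          (-1:ℝ)^i * ((m.choose i : ℕ):ℝ) * (p.eval (i:ℝ) - p.eval ((i:ℝ)+1))
          = w i + -(A i) := by
        intro i _
        simp only [hA, hw]
        ring
      rw [Finset.sum_congr rfl hR, Finset.sum_add_distrib, h2]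
      have h0 : (-1:ℝ)^(0:ℕ) * (((m+1).choose 0 : ℕ):ℝ) * p.eval ((0:ℕ):ℝ) = w 0 := by
        simp [hw]
      rw [h0]
      ring
    rw [key]
    set q : Polynomial ℝ := p - p.comp (X + C 1) with hq
    have hqe : ∀ i : ℕ, p.eval (i:ℝ) - p.eval ((i:ℝ)+1) = q.eval (i:ℝ) := by
      intro i; simp [hq, eval_comp]
    simp only [hqe]
    by_cases hq0 : q = 0
    · simp [hq0]
    · have hp0 : p ≠ 0 := by
        intro h; apply hq0; simp [hq, h]
      have hdc : (p.comp (X + C 1)).natDegree = p.natDegree := by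
        rw [natDegree_comp, natDegree_X_add_C, mul_one]
      have hlc : (p.comp (X + C 1)).leadingCoeff = p.leadingCoeff := by
        rw [leadingCoeff_comp (by rw [natDegree_X_add_C]; norm_num)]
        rw [(monic_X_add_C (1:ℝ)).leadingCoeff, one_pow, mul_one]
      have hc0 : p.comp (X + C 1) ≠ 0 := by
        intro h
        apply hp0
        rw [← leadingCoeff_eq_zero, ← hlc, h, leadingCoeff_zero]
      have hdeg : q.degree < p.degree := by
        rw [hq]
        exact degree_sub_lt (by rw [degree_eq_natDegree hp0, degree_eq_natDegree hc0, hdc]) hp0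
          hlc.symm
      have : q.natDegree < p.natDegree := natDegree_lt_natDegree hq0 hdeg
      exact ih q (by omega)
open Polynomial Finset

noncomputable def upoly (d : ℕ) : Polynomial ℝ := ∏ i ∈ range d, (X - C (i:ℝ))

lemma upoly_monic (d : ℕ) : (upoly d).Monic :=
  monic_prod_of_monic _ _ (fun i _ => monic_X_sub_C _)

lemma upoly_natDegree (d : ℕ) : (upoly d).natDegree = d := by
  rw [upoly, natDegree_prod_of_monic _ _ (fun i _ => monic_X_sub_C _)]
  simp only [natDegree_X_sub_C, Finset.sum_const, card_range, smul_eq_mul, mul_one]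

lemma upoly_eval (d j : ℕ) : (upoly d).eval (j:ℝ) = (j.descFactorial d : ℝ) := by
  induction d with
  | zero => simp [upoly]
  | succ d ih =>
    rw [upoly, Finset.prod_range_succ, ← upoly, eval_mul, eval_sub, eval_X, eval_C, ih,
      Nat.descFactorial_succ]
    rcases le_or_gt d j with h | h
    · push_cast [h]
      ring
    · rw [Nat.descFactorial_of_lt h]
      push_cast
      ring

lemma descFactorial_sum (d : ℕ) : ∀ j : ℕ,
    (d+1) * ∑ i ∈ range j, i.descFactorial d = j.descFactorial (d+1) := by
  intro j
  induction j with
  | zero => simp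
  | succ j ih =>
    rw [Finset.sum_range_succ, Nat.mul_add, ih, Nat.succ_descFactorial_succ,
      Nat.descFactorial_succ]
    rcases le_or_gt d j with h | h
    · have : j + 1 = (j - d) + (d + 1) := by omega
      rw [this, Nat.add_mul]
      ring
    · rw [Nat.descFactorial_of_lt h]
      simp

lemma upoly_sum (d : ℕ) (j : ℕ) :
    ∑ i ∈ range j, (upoly d).eval (i:ℝ) = (upoly (d+1)).eval (j:ℝ) / (d+1) := by
  have h := descFactorial_sum d j
  have hd : ((d:ℝ)+1) ≠ 0 := by positivity
  simp only [upoly_eval]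
  rw [eq_div_iff hd, mul_comm]
  exact_mod_cast h

lemma sum_eval : ∀ (d : ℕ) (p : Polynomial ℝ), p.natDegree ≤ d →
    ∃ q : Polynomial ℝ, q.natDegree ≤ d + 1 ∧
      ∀ j : ℕ, ∑ i ∈ range j, p.eval (i:ℝ) = q.eval (j:ℝ) := by
  intro d
  induction d with
  | zero =>
    intro p hp
    refine ⟨C (p.coeff 0) * X, ?_, ?_⟩
    · exact le_trans (natDegree_mul_le) (by simp)
    · intro j
      have hpc : ∀ y : ℝ, p.eval y = p.coeff 0 := fun y => by
        nth_rewrite 1 [eq_C_of_natDegree_le_zero hp]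
        rw [eval_C]
      simp only [hpc, Finset.sum_const, card_range, nsmul_eq_mul, eval_mul, eval_C, eval_X]
      ring
  | succ d ih =>
    intro p hp
    set c := p.coeff (d+1) with hc
    set p' := p - C c * upoly (d+1) with hp'
    have hdeg' : p'.natDegree ≤ d := by
      rw [natDegree_le_iff_coeff_eq_zero]
      intro N hN
      rw [hp', coeff_sub, coeff_C_mul]
      rcases Nat.lt_or_ge N (d+2) with h | h
      · have hN1 : N = d + 1 := by omega
        have hu1 : (upoly (d+1)).coeff (d+1) = 1 := by
          have h2 := (upoly_monic (d+1)).coeff_natDegree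
          rwa [upoly_natDegree] at h2
        rw [hN1, hu1, mul_one, hc, sub_self]
      · rw [coeff_eq_zero_of_natDegree_lt (by omega : p.natDegree < N),
          coeff_eq_zero_of_natDegree_lt (by rw [upoly_natDegree]; omega)]
        ring
    obtain ⟨q', hq'deg, hq'⟩ := ih p' hdeg'
    refine ⟨q' + C (c/(d+2)) * upoly (d+2), ?_, ?_⟩
    · refine le_trans (natDegree_add_le _ _) ?_
      refine max_le (by omega) (le_trans (natDegree_mul_le) ?_)
      simp [upoly_natDegree]
    · intro j
      have hsplit : ∀ i : ℕ, p.eval (i:ℝ) = p'.eval (i:ℝ) + c * (upoly (d+1)).eval (i:ℝ) := by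
        intro i; simp only [hp', eval_sub, eval_mul, eval_C]; ring
      simp only [hsplit]
      rw [Finset.sum_add_distrib, hq' j, ← Finset.mul_sum, upoly_sum]
      have h2 : ((d:ℝ)+2) ≠ 0 := by positivity
      simp only [eval_add, eval_mul, eval_C]
      push_cast
      field_simp
      ring

noncomputable def Npoly (k j : ℕ) : Polynomial ℝ := ∏ i ∈ range j, (X + C ((i:ℝ) + 1 - k))

noncomputable def Dpoly (m j : ℕ) : Polynomial ℝ := ∏ i ∈ Ico j m, (X - C (i:ℝ))

noncomputable def Ppoly (k m : ℕ) : Polynomial ℝ :=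
  ∑ j ∈ range (m+1), C ((-1:ℝ)^(m-j) * (m.choose j)) * (Npoly k j * Dpoly m j)

lemma Npoly_monic (k j : ℕ) : (Npoly k j).Monic :=
  monic_prod_of_monic _ _ (fun i _ => monic_X_add_C _)

lemma Dpoly_monic (m j : ℕ) : (Dpoly m j).Monic :=
  monic_prod_of_monic _ _ (fun i _ => monic_X_sub_C _)

lemma Npoly_natDegree (k j : ℕ) : (Npoly k j).natDegree = j := by
  rw [Npoly, natDegree_prod_of_monic _ _ (fun i _ => monic_X_add_C _)]
  simp only [natDegree_X_add_C, Finset.sum_const, card_range, smul_eq_mul, mul_one]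

lemma Dpoly_natDegree (m j : ℕ) : (Dpoly m j).natDegree = m - j := by
  rw [Dpoly, natDegree_prod_of_monic _ _ (fun i _ => monic_X_sub_C _)]
  simp only [natDegree_X_sub_C, Finset.sum_const, smul_eq_mul, mul_one, Nat.card_Ico]

lemma Pi_monic (k m j : ℕ) : (Npoly k j * Dpoly m j).Monic :=
  (Npoly_monic k j).mul (Dpoly_monic m j)

lemma Pi_natDegree (k m j : ℕ) (hj : j ≤ m) : (Npoly k j * Dpoly m j).natDegree = m := by
  rw [(Npoly_monic k j).natDegree_mul (Dpoly_monic m j), Npoly_natDegree, Dpoly_natDegree]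
  omega

lemma Pi_rec (k m j : ℕ) (hj : j < m) :
    (Npoly k (j+1) * Dpoly m (j+1)) * (X - C (j:ℝ))
      = (Npoly k j * Dpoly m j) * (X + C ((j:ℝ) + 1 - k)) := by
  have hN : Npoly k (j+1) = Npoly k j * (X + C ((j:ℝ) + 1 - k)) := by
    rw [Npoly, Finset.prod_range_succ, ← Npoly]
  have hD : Dpoly m j = (X - C (j:ℝ)) * Dpoly m (j+1) := by
    rw [Dpoly, Finset.prod_eq_prod_Ico_succ_bot hj, ← Dpoly]
  rw [hN, hD]
  ring

lemma coeff_succ_mul_X_sub (A : Polynomial ℝ) (b : ℝ) (s : ℕ) :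
    (A * (X - C b)).coeff (s+1) = A.coeff s - b * A.coeff (s+1) := by
  rw [mul_sub, coeff_sub, coeff_mul_X, mul_comm A (C b), coeff_C_mul]

lemma coeff_succ_mul_X_add (A : Polynomial ℝ) (b : ℝ) (s : ℕ) :
    (A * (X + C b)).coeff (s+1) = A.coeff s + b * A.coeff (s+1) := by
  rw [mul_add, coeff_add, coeff_mul_X]
  rw [mul_comm A (C b), coeff_C_mul]

lemma Gpoly (k m : ℕ) : ∀ r, r ≤ m → ∃ p : Polynomial ℝ, p.natDegree ≤ 2*r ∧
    ∀ j, j ≤ m → (Npoly k j * Dpoly m j).coeff (m - r) = p.eval (j:ℝ) := by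
  intro r
  induction r with
  | zero =>
    intro _
    refine ⟨1, by simp, fun j hj => ?_⟩
    have h := (Pi_monic k m j).coeff_natDegree
    rw [Pi_natDegree k m j hj] at h
    simpa using h
  | succ r ih =>
    intro hr
    obtain ⟨pr, hprdeg, hpr⟩ := ih (by omega)
    -- difference recurrence
    have hdiff : ∀ j, j < m →
        (Npoly k (j+1) * Dpoly m (j+1)).coeff (m - (r+1))
          - (Npoly k j * Dpoly m j).coeff (m - (r+1))
        = ((j:ℝ) + 1 - k) * pr.eval (j:ℝ) + (j:ℝ) * pr.eval ((j:ℝ)+1) := by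
      intro j hj
      have hs : m - r = (m - (r+1)) + 1 := by omega
      have h := congrArg (fun P => Polynomial.coeff P (m - r)) (Pi_rec k m j hj)
      rw [hs, coeff_succ_mul_X_sub, coeff_succ_mul_X_add] at h
      rw [← hs] at h
      rw [hpr j (by omega), hpr (j+1) (by omega)] at h
      push_cast at h
      linarith
    -- sum polynomial for the difference
    set qq : Polynomial ℝ := (X + C (1 - (k:ℝ))) * pr + X * (pr.comp (X + C 1)) with hqq
    have hqqdeg : qq.natDegree ≤ 2*r + 1 := by
      refine le_trans (natDegree_add_le _ _) (max_le ?_ ?_)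
      · refine le_trans (natDegree_mul_le) ?_
        have := natDegree_X_add_C (1 - (k:ℝ))
        omega
      · refine le_trans (natDegree_mul_le) ?_
        rw [natDegree_comp, natDegree_X_add_C, mul_one, natDegree_X]
        omega
    have hqqeval : ∀ j : ℕ, qq.eval (j:ℝ)
        = ((j:ℝ) + 1 - k) * pr.eval (j:ℝ) + (j:ℝ) * pr.eval ((j:ℝ)+1) := by
      intro j
      simp only [hqq, eval_add, eval_mul, eval_X, eval_C, eval_comp]
      ring
    obtain ⟨Q, hQdeg, hQ⟩ := sum_eval (2*r+1) qq hqqdeg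
    refine ⟨C ((Npoly k 0 * Dpoly m 0).coeff (m - (r+1))) + Q, ?_, ?_⟩
    · refine le_trans (natDegree_add_le _ _) (max_le (by simp) (by omega))
    · intro j hj
      have htel : (Npoly k j * Dpoly m j).coeff (m - (r+1))
          = (Npoly k 0 * Dpoly m 0).coeff (m - (r+1))
            + ∑ i ∈ range j, ((Npoly k (i+1) * Dpoly m (i+1)).coeff (m - (r+1))
                - (Npoly k i * Dpoly m i).coeff (m - (r+1))) := by
        rw [Finset.sum_range_sub (fun i => (Npoly k i * Dpoly m i).coeff (m - (r+1)))]
        ring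
      rw [htel]
      have hcongr : ∀ i ∈ range j, ((Npoly k (i+1) * Dpoly m (i+1)).coeff (m - (r+1))
          - (Npoly k i * Dpoly m i).coeff (m - (r+1))) = qq.eval (i:ℝ) := by
        intro i hi
        rw [Finset.mem_range] at hi
        rw [hdiff i (by omega), hqqeval i]
      rw [Finset.sum_congr rfl hcongr, hQ j]
      simp

lemma Ppoly_natDegree (k m : ℕ) : (Ppoly k m).natDegree ≤ m/2 := by
  rw [natDegree_le_iff_coeff_eq_zero]
  intro N hN
  rw [Ppoly, finset_sum_coeff]
  have hcoeff : ∀ j ∈ range (m+1),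
      (C ((-1:ℝ)^(m-j) * (m.choose j)) * (Npoly k j * Dpoly m j)).coeff N
      = (-1:ℝ)^(m-j) * (m.choose j) * (Npoly k j * Dpoly m j).coeff N := by
    intro j _; rw [coeff_C_mul]
  rw [Finset.sum_congr rfl hcoeff]
  rcases Nat.lt_or_ge m N with h | h
  · refine Finset.sum_eq_zero (fun j hj => ?_)
    rw [Finset.mem_range] at hj
    rw [coeff_eq_zero_of_natDegree_lt (by rw [Pi_natDegree k m j (by omega)]; omega)]
    ring
  · set r := m - N with hr
    have hrm : r ≤ m := by omega
    have h2r : 2*r < m := by omega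
    have hNr : N = m - r := by omega
    obtain ⟨p, hpdeg, hp⟩ := Gpoly k m r hrm
    have hcongr2 : ∀ j ∈ range (m+1),
        (-1:ℝ)^(m-j) * (m.choose j) * (Npoly k j * Dpoly m j).coeff N
        = (-1:ℝ)^m * ((-1:ℝ)^j * (m.choose j) * p.eval (j:ℝ)) := by
      intro j hj
      rw [Finset.mem_range] at hj
      rw [hNr, hp j (by omega)]
      have hsign : (-1:ℝ)^(m-j) = (-1:ℝ)^m * (-1:ℝ)^j := by
        have hmj : m + j = (m - j) + 2*j := by omega
        rw [← pow_add, hmj, pow_add, pow_mul]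
        norm_num
      rw [hsign]
      ring
    rw [Finset.sum_congr rfl hcongr2, ← Finset.mul_sum,
      killpoly m p (by omega), mul_zero]

end Comb

section Anal
open Polynomial MeasureTheory Set Filter Real Topology

lemma intpow (x : ℝ) (hx : 0 < x) : ∀ (a d : ℕ),
    IntegrableOn (fun t : ℝ => t^a / (x + t)^(a+2+d)) (Ioi 0) ∧
    ∫ t in Ioi (0:ℝ), t^a / (x+t)^(a+2+d)
      = (a.factorial : ℝ) * (d.factorial : ℝ) / ((a+d+1).factorial * x^(d+1)) := by
  intro a
  induction a with
  | zero =>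
    intro d
    have hfun : (fun t:ℝ => t^0/(x+t)^(0+2+d)) = fun t => ((x+t)^(d+2))⁻¹ := by
      funext t
      rw [pow_zero, show 0+2+d = d+2 by omega, one_div]
    set F : ℝ → ℝ := fun t => -((d:ℝ)+1)⁻¹ * ((x+t)^(d+1))⁻¹ with hF
    have hder : ∀ t ∈ Ici (0:ℝ), HasDerivAt F (((x+t)^(d+2))⁻¹) t := by
      intro t ht
      have hxt : (0:ℝ) < x + t := by
        simp only [mem_Ici] at ht; linarith
      have h1 : HasDerivAt (fun t:ℝ => x + t) 1 t := (hasDerivAt_id t).const_add x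
      have h2 : HasDerivAt (fun t:ℝ => (x+t)^(d+1)) (((d:ℝ)+1) * (x+t)^d * 1) t := by
        simpa using h1.fun_pow (d+1)
      have h3 := (h2.inv (pow_ne_zero _ hxt.ne')).const_mul (-(((d:ℝ)+1)⁻¹))
      have h4 : -(((d:ℝ)+1)⁻¹) * (-(((d:ℝ)+1) * (x+t)^d * 1) / ((x+t)^(d+1))^2)
          = ((x+t)^(d+2))⁻¹ := by
        have hd1 : ((d:ℝ)+1) ≠ 0 := by positivity
        field_simp
        ring
      rw [h4] at h3
      exact h3
    have hnn : ∀ t ∈ Ioi (0:ℝ), 0 ≤ ((x+t)^(d+2))⁻¹ := by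
      intro t ht
      simp only [mem_Ioi] at ht
      positivity
    have htend : Tendsto F atTop (𝓝 0) := by
      have h1 : Tendsto (fun t:ℝ => x + t) atTop atTop :=
        tendsto_atTop_add_const_left _ x tendsto_id
      have h2 : Tendsto (fun t:ℝ => (x+t)^(d+1)) atTop atTop :=
        (tendsto_pow_atTop (Nat.succ_ne_zero d)).comp h1
      have h3 := h2.inv_tendsto_atTop.const_mul (-((d:ℝ)+1)⁻¹)
      rw [mul_zero] at h3
      exact h3
    constructor
    · rw [hfun]
      exact integrableOn_Ioi_deriv_of_nonneg' hder hnn htend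
    · rw [hfun, integral_Ioi_of_hasDerivAt_of_nonneg' hder hnn htend]
      have h0 : F 0 = -((d:ℝ)+1)⁻¹ * (x^(d+1))⁻¹ := by rw [hF]; simp
      rw [h0, show 0+d+1 = d+1 by omega, Nat.factorial_succ]
      have hd1 : ((d:ℝ)+1) ≠ 0 := by positivity
      have hxp : (x:ℝ)^(d+1) ≠ 0 := by positivity
      have hdf : ((d.factorial:ℝ)) ≠ 0 := by positivity
      simp only [Nat.factorial_zero, Nat.cast_one, one_mul]
      push_cast
      field_simp
      ring
  | succ a ih =>
    intro d
    obtain ⟨hint1, hval1⟩ := ih d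
    set A : ℕ := a+2+d with hA
    have hAR : ((A:ℝ)) = (a:ℝ)+2+d := by rw [hA]; push_cast; ring
    have hAne : ((A:ℝ)) ≠ 0 := by rw [hAR]; positivity
    set c : ℝ := ((A:ℝ))⁻¹ with hc
    set f1 : ℝ → ℝ := fun t => t^a/(x+t)^A with hf1
    set f2 : ℝ → ℝ := fun t => t^(a+1)/(x+t)^(A+1) with hf2
    have hexp : (a+1)+2+d = A+1 := by omega
    have hgoalfun : (fun t:ℝ => t^(a+1)/(x+t)^((a+1)+2+d)) = f2 := by
      funext t; rw [hexp]
    have hcont2 : ContinuousOn f2 (Ioi (0:ℝ)) := by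
      apply ContinuousOn.div (continuous_pow _).continuousOn
        ((continuous_const.add continuous_id).pow _).continuousOn
      intro t ht
      simp only [mem_Ioi] at ht
      simp only [Pi.pow_apply, Pi.add_apply, id]
      positivity
    have hbound : ∀ t ∈ Ioi (0:ℝ), ‖f2 t‖ ≤ ‖f1 t‖ := by
      intro t ht
      simp only [mem_Ioi] at ht
      have hxt : (0:ℝ) < x + t := by linarith
      rw [hf1, hf2]
      simp only [norm_div, norm_pow, Real.norm_eq_abs, abs_of_pos ht, abs_of_pos hxt]
      rw [div_le_div_iff₀ (by positivity) (by positivity), pow_succ, pow_succ]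
      calc t^a * t * (x+t)^A ≤ t^a * (x+t) * (x+t)^A := by
            have ht2 : t ≤ x + t := by linarith
            exact mul_le_mul_of_nonneg_right
              (mul_le_mul_of_nonneg_left ht2 (pow_nonneg ht.le a)) (pow_nonneg hxt.le A)
        _ = t^a * ((x+t)^A * (x+t)) := by ring
    have hint2 : IntegrableOn f2 (Ioi (0:ℝ)) := by
      apply Integrable.mono hint1 (hcont2.aestronglyMeasurable measurableSet_Ioi)
      exact (ae_restrict_iff' measurableSet_Ioi).mpr (Filter.Eventually.of_forall hbound)
    refine ⟨by rw [hgoalfun]; exact hint2, ?_⟩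
    set g : ℝ → ℝ := fun t => c * (t^(a+1) * ((x+t)^A)⁻¹) with hg
    set Dg : ℝ → ℝ := fun t => c * ((a:ℝ)+1) * f1 t - f2 t with hDg
    have hder : ∀ t ∈ Ici (0:ℝ), HasDerivAt g (Dg t) t := by
      intro t ht
      simp only [mem_Ici] at ht
      have hxt : (0:ℝ) < x + t := by linarith
      have hpow : HasDerivAt (fun t:ℝ => t^(a+1)) (((a:ℝ)+1)*t^a) t := by
        simpa using hasDerivAt_pow (a+1) t
      have h1 : HasDerivAt (fun t:ℝ => x + t) 1 t := (hasDerivAt_id t).const_add x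
      have h2 : HasDerivAt (fun t:ℝ => (x+t)^A) (((A:ℝ)) * (x+t)^(A-1) * 1) t := by
        simpa using h1.fun_pow A
      have h3 := h2.fun_inv (pow_ne_zero _ hxt.ne')
      have h4 := (hpow.fun_mul h3).const_mul c
      have h5 : c * (((a:ℝ)+1)*t^a * ((x+t)^A)⁻¹
          + t^(a+1) * (-(((A:ℝ)) * (x+t)^(A-1) * 1) / ((x+t)^A)^2)) = Dg t := by
      -- algebra
        rw [hDg, hf1, hf2, hc, hAR]
        have hxtne : (x+t) ≠ 0 := hxt.ne'
        have hp1 : (x+t)^(A-1) * (x+t) = (x+t)^A := by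
          rw [← pow_succ, show A - 1 + 1 = A by omega]
        have hane : ((a:ℝ)+2+(d:ℝ)) ≠ 0 := by positivity
        field_simp
        rw [pow_succ (x+t) A]
        linear_combination (-((a:ℝ)+2+(d:ℝ)) * t^(a+1) * (x+t)^A) * hp1
      rw [h5] at h4
      exact h4
    have hgtend : Tendsto g atTop (𝓝 0) := by
      have hub : Tendsto (fun t:ℝ => c * ((x+t)^(d+1))⁻¹) atTop (𝓝 0) := by
        have h1 : Tendsto (fun t:ℝ => x + t) atTop atTop :=
          tendsto_atTop_add_const_left _ x tendsto_id
        have h2 : Tendsto (fun t:ℝ => (x+t)^(d+1)) atTop atTop :=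
          (tendsto_pow_atTop (Nat.succ_ne_zero d)).comp h1
        have h3 := h2.inv_tendsto_atTop.const_mul c
        rwa [mul_zero] at h3
      apply tendsto_of_tendsto_of_tendsto_of_le_of_le' tendsto_const_nhds hub
      · filter_upwards [eventually_ge_atTop (0:ℝ)] with t ht
        have hxt : (0:ℝ) < x + t := by linarith
        have hc0 : (0:ℝ) ≤ c := by rw [hc]; positivity
        rw [hg]
        positivity
      · filter_upwards [eventually_ge_atTop (0:ℝ)] with t ht
        have hxt : (0:ℝ) < x + t := by linarith
        have hc0 : (0:ℝ) ≤ c := by rw [hc]; positivity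
        have hP : (0:ℝ) < (x+t)^(a+1) := by positivity
        have hQ : (0:ℝ) < (x+t)^(d+1) := by positivity
        have h6 : t^(a+1)/(x+t)^(a+1) ≤ 1 :=
          (div_le_one hP).mpr (pow_le_pow_left₀ ht (by linarith) _)
        rw [hg]
        apply mul_le_mul_of_nonneg_left _ hc0
        rw [← div_eq_mul_inv, inv_eq_one_div, div_le_div_iff₀ (by positivity) hQ, one_mul]
        calc t^(a+1) * (x+t)^(d+1) ≤ (x+t)^(a+1) * (x+t)^(d+1) :=
              mul_le_mul_of_nonneg_right
                (pow_le_pow_left₀ ht (le_add_of_nonneg_left hx.le) _) hQ.le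
          _ = (x+t)^A := by rw [← pow_add, show (a+1)+(d+1) = A by omega]
    have hDgint : IntegrableOn Dg (Ioi (0:ℝ)) := by
      have h1 := hint1.const_mul (c * ((a:ℝ)+1))
      exact h1.sub hint2
    have hIg : ∫ t in Ioi (0:ℝ), Dg t = 0 - g 0 :=
      integral_Ioi_of_hasDerivAt_of_tendsto
        ((hder 0 self_mem_Ici).continuousAt.continuousWithinAt)
        (fun t ht => hder t (Ioi_subset_Ici_self ht)) hDgint hgtend
    have hg0 : g 0 = 0 := by
      rw [hg]
      simp
    have hsplit : (fun t:ℝ => f2 t) = fun t => c * ((a:ℝ)+1) * f1 t - Dg t := by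
      funext t; rw [hDg]; ring
    rw [hgoalfun, show (∫ t in Ioi (0:ℝ), f2 t) = ∫ t in Ioi (0:ℝ),
        (c * ((a:ℝ)+1) * f1 t - Dg t) from by rw [← hsplit]]
    rw [integral_sub (hint1.const_mul _) hDgint, integral_const_mul, hval1, hIg, hg0]
    rw [show (a+1)+d+1 = (a+d+1)+1 by omega, Nat.factorial_succ ((a+d+1)),
      Nat.factorial_succ a]
    have hd1 : ((a+d+1).factorial:ℝ) ≠ 0 := by positivity
    have hxp : (x:ℝ)^(d+1) ≠ 0 := by positivity
    have hdf : ((d.factorial:ℝ)) ≠ 0 := by positivity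
    have haf : ((a.factorial:ℝ)) ≠ 0 := by positivity
    rw [hc, hAR]
    have hane : ((a:ℝ)+2+(d:ℝ)) ≠ 0 := by positivity
    push_cast
    field_simp
    ring

lemma moment_formula (k m n : ℕ) (hk : 1 ≤ k) (hn : k + m ≤ n) (x : ℝ) (hx : 0 < x) :
    Mnk n k (fun t => (t - x) ^ m) x
      = x^m * (Ppoly k m).eval (n:ℝ) / ∏ i ∈ Finset.range m, ((n:ℝ) - i) := by
  have hkn : k ≤ n := by omega
  have hmn : m ≤ n := by omega
  -- value and integrability of each monomial integral
  have hIj : ∀ j, j ≤ m →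
      IntegrableOn (fun t:ℝ => t^(n-k+j)/(x+t)^(2*n-k+2)) (Ioi 0) ∧
      ∫ t in Ioi (0:ℝ), t^(n-k+j)/(x+t)^(2*n-k+2)
        = (((n-k+j).factorial:ℝ) * ((n-j).factorial:ℝ))
          / (((2*n-k+1).factorial:ℝ) * x^((n-j)+1)) := by
    intro j hj
    have he1 : 2*n-k+2 = (n-k+j)+2+(n-j) := by omega
    have he2 : (n-k+j)+(n-j)+1 = 2*n-k+1 := by omega
    obtain ⟨h1, h2⟩ := intpow x hx (n-k+j) (n-j)
    rw [he1]
    rw [he2] at h2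
    exact ⟨h1, h2⟩
  -- expansion of the integrand
  have hfeq : (fun t:ℝ => t^(n-k)/(x+t)^(2*n-k+2) * (t-x)^m)
      = fun t => ∑ j ∈ Finset.range (m+1),
          ((-1:ℝ)^(m-j) * (m.choose j) * x^(m-j)) * (t^(n-k+j)/(x+t)^(2*n-k+2)) := by
    funext t
    rw [sub_pow, Finset.mul_sum]
    refine Finset.sum_congr rfl (fun j hj => ?_)
    rw [Finset.mem_range] at hj
    have hsign : (-1:ℝ)^(j+m) = (-1:ℝ)^(m-j) := by
      rw [show j+m = (m-j)+2*j by omega, pow_add, pow_mul, neg_one_sq, one_pow, mul_one]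
    rw [hsign, pow_add]
    ring
  rw [Mnk, hfeq]
  rw [integral_finset_sum _ (fun j hj => by
    refine Integrable.const_mul ?_ _
    exact (hIj j (by rw [Finset.mem_range] at hj; omega)).1)]
  have hterms : ∀ j ∈ Finset.range (m+1),
      (∫ t in Ioi (0:ℝ), ((-1:ℝ)^(m-j) * (m.choose j) * x^(m-j))
          * (t^(n-k+j)/(x+t)^(2*n-k+2)))
      = ((-1:ℝ)^(m-j) * (m.choose j) * x^(m-j)) *
        ((((n-k+j).factorial:ℝ) * ((n-j).factorial:ℝ))
          / (((2*n-k+1).factorial:ℝ) * x^((n-j)+1))) := by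
    intro j hj
    rw [Finset.mem_range] at hj
    rw [MeasureTheory.integral_const_mul, (hIj j (by omega)).2]
  rw [Finset.sum_congr rfl hterms]
  -- evaluate Ppoly
  have hPeval : (Ppoly k m).eval (n:ℝ) = ∑ j ∈ Finset.range (m+1),
      (-1:ℝ)^(m-j) * (m.choose j) *
        ((∏ i ∈ Finset.range j, ((n:ℝ) + ((i:ℝ) + 1 - k)))
          * ∏ i ∈ Finset.Ico j m, ((n:ℝ) - i)) := by
    rw [Ppoly, eval_finset_sum]
    refine Finset.sum_congr rfl (fun j hj => ?_)
    rw [eval_mul, eval_C, eval_mul, Npoly, Dpoly, eval_prod, eval_prod]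
    simp only [eval_add, eval_sub, eval_X, eval_C]
  rw [hPeval, Finset.mul_sum]
  conv_rhs => rw [Finset.mul_sum, Finset.sum_div]
  refine Finset.sum_congr rfl (fun j hj => ?_)
  rw [Finset.mem_range] at hj
  have hjm : j ≤ m := by omega
  -- casts and factorial identities
  have hfac1 : ((n-k+j).factorial:ℝ)
      = ((n-k).factorial:ℝ) * ∏ i ∈ Finset.range j, ((n:ℝ) + ((i:ℝ) + 1 - k)) := by
    have h1 : ∀ J : ℕ, (n-k+J).factorial = (n-k).factorial * ∏ i ∈ Finset.range J, (n-k+1+i) := by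
      intro J
      induction J with
      | zero => simp
      | succ J ih =>
        rw [Finset.prod_range_succ, show n-k+(J+1) = (n-k+J)+1 by omega,
          Nat.factorial_succ, ih]
        ring
    rw [h1 j]
    push_cast [Nat.cast_sub hkn]
    congr 1
    refine Finset.prod_congr rfl (fun i _ => by ring)
  have hdesc : ((n.descFactorial j : ℕ):ℝ) = ∏ i ∈ Finset.range j, ((n:ℝ)-i) := by
    rw [← upoly_eval j n, upoly, eval_prod]
    simp only [eval_sub, eval_X, eval_C]
  have hfac2 : (n.factorial:ℝ)
      = ((n-j).factorial:ℝ) * ∏ i ∈ Finset.range j, ((n:ℝ)-i) := by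
    rw [← hdesc]
    exact_mod_cast congrArg (Nat.cast (R := ℝ))
      (Nat.factorial_mul_descFactorial (le_trans hjm hmn)).symm
  have hsplitD : (∏ i ∈ Finset.range m, ((n:ℝ) - i))
      = (∏ i ∈ Finset.range j, ((n:ℝ)-i)) * ∏ i ∈ Finset.Ico j m, ((n:ℝ)-i) := by
    rw [Finset.range_eq_Ico, ← Finset.prod_Ico_consecutive _ (Nat.zero_le j) hjm, ← Finset.range_eq_Ico]
  have hD1 : (∏ i ∈ Finset.range j, ((n:ℝ)-i)) ≠ 0 := by
    rw [Finset.prod_ne_zero_iff]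
    intro i hi
    rw [Finset.mem_range] at hi
    have : (i:ℝ) < (n:ℝ) := by exact_mod_cast (by omega : i < n)
    linarith
  have hD2 : (∏ i ∈ Finset.Ico j m, ((n:ℝ)-i)) ≠ 0 := by
    rw [Finset.prod_ne_zero_iff]
    intro i hi
    rw [Finset.mem_Ico] at hi
    have : (i:ℝ) < (n:ℝ) := by exact_mod_cast (by omega : i < n)
    linarith
  have hxp : x^(n+1) * x^(m-j) = x^m * x^((n-j)+1) := by
    rw [← pow_add, ← pow_add]
    congr 1
    omega
  have hne1 : ((n-k).factorial:ℝ) ≠ 0 := by positivity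
  have hne2 : ((n-j).factorial:ℝ) ≠ 0 := by positivity
  have hne3 : ((2*n-k+1).factorial:ℝ) ≠ 0 := by positivity
  have hne4 : (n.factorial:ℝ) ≠ 0 := by positivity
  have hnex : x ≠ 0 := hx.ne'
  rw [hfac1, hfac2, hsplitD]
  field_simp
  linear_combination (((m.choose j:ℕ):ℝ) * (∏ i ∈ Finset.range j, ((n:ℝ) + ((i:ℝ)+1-(k:ℝ))))) * hxp

end Anal

/-- `M_{n,k}(φ_{x,m};x) = O(n^{-⌊(m+1)/2⌋})` as `n → ∞`, for fixed `x > 0`. -/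
theorem Mnk_central_moment_order (k m : ℕ) (hk : 1 ≤ k) (x : ℝ) (hx : 0 < x) :
    ∃ C > (0 : ℝ), ∀ n : ℕ, k + m ≤ n →
      |Mnk n k (fun t => (t - x) ^ m) x| ≤ C * ((n : ℝ) ^ ((m + 1) / 2 : ℕ))⁻¹ := by
  set P := Ppoly k m with hP
  set CP : ℝ := ∑ d ∈ Finset.range (m/2+1), |P.coeff d| with hCP
  have hCP0 : 0 ≤ CP := Finset.sum_nonneg (fun d _ => abs_nonneg _)
  refine ⟨x^m * (CP + 1) * ((m:ℝ)+1)^m, by positivity, ?_⟩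
  intro n hn
  have hn1 : 1 ≤ n := by omega
  have hnR : (1:ℝ) ≤ (n:ℝ) := by exact_mod_cast hn1
  have hnpos : (0:ℝ) < (n:ℝ) := by linarith
  rw [moment_formula k m n hk hn x hx]
  have hPdeg : P.natDegree < m/2 + 1 := by
    rw [hP]
    have := Ppoly_natDegree k m
    omega
  have hPevalsum : P.eval (n:ℝ) = ∑ d ∈ Finset.range (m/2+1), P.coeff d * (n:ℝ)^d :=
    Polynomial.eval_eq_sum_range' hPdeg _
  have hPbound : |P.eval (n:ℝ)| ≤ CP * (n:ℝ)^(m/2) := by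
    rw [hPevalsum, hCP]
    refine le_trans (Finset.abs_sum_le_sum_abs _ _) ?_
    rw [Finset.sum_mul]
    refine Finset.sum_le_sum (fun d hd => ?_)
    rw [Finset.mem_range] at hd
    rw [abs_mul, abs_pow, abs_of_nonneg (le_of_lt hnpos)]
    exact mul_le_mul_of_nonneg_left (pow_le_pow_right₀ hnR (by omega)) (abs_nonneg _)
  have hDpos : (0:ℝ) < ∏ i ∈ Finset.range m, ((n:ℝ) - i) := by
    refine Finset.prod_pos (fun i hi => ?_)
    rw [Finset.mem_range] at hi
    have : (i:ℝ) < (n:ℝ) := by exact_mod_cast (by omega : i < n)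
    linarith
  have hm0 : (0:ℝ) ≤ (m:ℝ) := Nat.cast_nonneg m
  have hnm : (m:ℝ) + 1 ≤ (n:ℝ) := by exact_mod_cast (by omega : m + 1 ≤ n)
  have hDlow : ((n:ℝ)/((m:ℝ)+1))^m ≤ ∏ i ∈ Finset.range m, ((n:ℝ) - i) := by
    have hconst : ((n:ℝ)/((m:ℝ)+1))^m = ∏ _i ∈ Finset.range m, ((n:ℝ)/((m:ℝ)+1)) := by
      rw [Finset.prod_const, Finset.card_range]
    rw [hconst]
    refine Finset.prod_le_prod (fun i _ => by positivity) (fun i hi => ?_)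
    rw [Finset.mem_range] at hi
    have him : (i:ℝ) ≤ (m:ℝ) - 1 := by
      have : (i:ℝ) + 1 ≤ (m:ℝ) := by exact_mod_cast (by omega : i + 1 ≤ m)
      linarith
    rw [div_le_iff₀ (by positivity)]
    have h1 : (n:ℝ) - (m:ℝ) + 1 ≤ (n:ℝ) - i := by linarith
    have h2 : (n:ℝ) ≤ ((n:ℝ) - (m:ℝ) + 1) * ((m:ℝ)+1) := by nlinarith
    calc (n:ℝ) ≤ ((n:ℝ) - (m:ℝ) + 1) * ((m:ℝ)+1) := h2
      _ ≤ ((n:ℝ) - i) * ((m:ℝ)+1) := by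
          exact mul_le_mul_of_nonneg_right h1 (by positivity)
  have hpowpos : (0:ℝ) < ((n:ℝ)/((m:ℝ)+1))^m := by positivity
  have hsplitpow : (n:ℝ)^m = (n:ℝ)^(m/2) * (n:ℝ)^((m+1)/2) := by
    rw [← pow_add]
    congr 1
    omega
  calc |x^m * P.eval (n:ℝ) / ∏ i ∈ Finset.range m, ((n:ℝ) - i)|
      = x^m * |P.eval (n:ℝ)| / ∏ i ∈ Finset.range m, ((n:ℝ) - i) := by
        rw [abs_div, abs_mul, abs_of_pos (pow_pos hx m), abs_of_pos hDpos]
    _ ≤ x^m * (CP * (n:ℝ)^(m/2)) / (((n:ℝ)/((m:ℝ)+1))^m) := by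
        exact div_le_div₀ (by positivity)
          (mul_le_mul_of_nonneg_left hPbound (by positivity)) hpowpos hDlow
    _ = x^m * CP * ((m:ℝ)+1)^m * ((n:ℝ)^((m+1)/2))⁻¹ := by
        rw [div_pow]
        have hne1 : ((m:ℝ)+1) ≠ 0 := by positivity
        have hne2 : (n:ℝ) ≠ 0 := hnpos.ne'
        have hne3 : ((n:ℝ)^((m+1)/2)) ≠ 0 := by positivity
        field_simp
        linear_combination (-CP) * hsplitpow
    _ ≤ x^m * (CP + 1) * ((m:ℝ)+1)^m * ((n:ℝ)^((m+1)/2))⁻¹ := by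
        have h1 : (0:ℝ) ≤ ((n:ℝ)^((m+1)/2))⁻¹ := by positivity
        have h2 : (0:ℝ) ≤ ((m:ℝ)+1)^m := by positivity
        have h3 : x^m * CP ≤ x^m * (CP+1) :=
          mul_le_mul_of_nonneg_left (by linarith) (by positivity)
        exact mul_le_mul_of_nonneg_right
          (mul_le_mul_of_nonneg_right h3 h2) h1
end

section
/- Let k ≥ 1 and p ≥ 0 be fixed integers. Then there exists a constant N_{p,k} > 0 such that for every integer n ≥ max(p, k) and every f : [0,∞) → ℝ with ‖f‖_p = sup_{x ≥ 0} w_p(x)|f(x)| finite, one has sup_{x > 0} w_p(x)|M_{n,k}(f; x)| ≤ N_{p,k}·‖f‖_p. In particular, M_{n,k} maps the weighted space C_p into itself. -/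
open MeasureTheory Set

open Filter Topology


lemma tendsto_inv_pow_shift (x : ℝ) (m : ℕ) (hm : 1 ≤ m) :
    Tendsto (fun t : ℝ => ((x + t) ^ m)⁻¹) atTop (𝓝 0) := by
  apply Filter.Tendsto.inv_tendsto_atTop
  exact (tendsto_pow_atTop (by omega)).comp (tendsto_atTop_add_const_left _ x tendsto_id)

lemma integrableOn_inv_pow_shift {x : ℝ} (hx : 0 < x) {m : ℕ} (hm : 2 ≤ m) :
    IntegrableOn (fun t : ℝ => ((x + t) ^ m)⁻¹) (Ioi 0) := by
  have hmeas : Measurable fun t : ℝ => ((x + t) ^ m)⁻¹ :=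
    ((measurable_const.add measurable_id).pow_const m).inv
  have h1 : IntegrableOn (fun t : ℝ => ((x + t) ^ m)⁻¹) (Ioc 0 x) := by
    apply Integrable.mono' (integrable_const ((x ^ m)⁻¹)) hmeas.aestronglyMeasurable.restrict
    filter_upwards [ae_restrict_mem measurableSet_Ioc] with t ht
    have hxt : 0 < x + t := by linarith [ht.1]
    rw [Real.norm_eq_abs, abs_of_nonneg (by positivity)]
    exact inv_anti₀ (by positivity) (pow_le_pow_left₀ hx.le (by linarith [ht.1]) m)
  have h2 : IntegrableOn (fun t : ℝ => ((x + t) ^ m)⁻¹) (Ioi x) := by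
    apply Integrable.mono' (integrableOn_Ioi_rpow_of_lt (show (-(m:ℝ)) < -1 by
      have : (2:ℝ) ≤ (m:ℝ) := by exact_mod_cast hm
      linarith) hx) hmeas.aestronglyMeasurable.restrict
    filter_upwards [ae_restrict_mem measurableSet_Ioi] with t ht
    have ht0 : 0 < t := lt_trans hx ht
    rw [Real.norm_eq_abs, abs_of_nonneg (by positivity), Real.rpow_neg ht0.le,
      Real.rpow_natCast]
    exact inv_anti₀ (by positivity) (pow_le_pow_left₀ ht0.le (by linarith [ht.out]) m)
  exact (h1.union h2).mono_set (fun t ht => (le_or_gt t x).imp (fun h => ⟨ht, h⟩) id)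

lemma integrableOn_kernel {x : ℝ} (hx : 0 < x) (a c : ℕ) (hac : a + 2 ≤ c) :
    IntegrableOn (fun t : ℝ => t ^ a / (x + t) ^ c) (Ioi 0) := by
  have hmeas : Measurable fun t : ℝ => t ^ a / (x + t) ^ c :=
    (measurable_id.pow_const a).div ((measurable_const.add measurable_id).pow_const c)
  apply Integrable.mono' (integrableOn_inv_pow_shift hx (show 2 ≤ c - a by omega))
    hmeas.aestronglyMeasurable.restrict
  filter_upwards [ae_restrict_mem measurableSet_Ioi] with t ht
  have ht0 : 0 < t := ht
  have hxt : 0 < x + t := by linarith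
  rw [Real.norm_eq_abs, abs_of_nonneg (by positivity), div_le_iff₀ (by positivity)]
  calc t ^ a ≤ (x + t) ^ a := pow_le_pow_left₀ ht0.le (by linarith) a
    _ = ((x + t) ^ (c - a))⁻¹ * (x + t) ^ c := by
        rw [inv_mul_eq_div, eq_div_iff (by positivity), ← pow_add]
        congr 1
        omega

lemma integral_kernel (x : ℝ) (hx : 0 < x) (b : ℕ) (a : ℕ) :
    ∫ t in Ioi (0:ℝ), t ^ a / (x + t) ^ (a + b + 2) =
      ((a.factorial : ℝ) * b.factorial) / ((a + b + 1).factorial * x ^ (b + 1)) := by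
  have hbfac : (0:ℝ) < (b.factorial : ℝ) := by exact_mod_cast b.factorial_pos
  induction a with
  | zero =>
    have hF : ∀ t ∈ Ici (0:ℝ), HasDerivAt (fun t : ℝ => -((b:ℝ)+1)⁻¹ * ((x + t) ^ (b+1))⁻¹)
        ((fun t : ℝ => t ^ 0 / (x + t) ^ (0 + b + 2)) t) t := by
      intro t ht
      have hxt : 0 < x + t := by have : (0:ℝ) ≤ t := ht; linarith
      have h1 : HasDerivAt (fun t : ℝ => (x + t) ^ (b+1))
          ((((b:ℝ)+1)) * (x+t)^b * 1) t := by
        have := ((hasDerivAt_id t).const_add x).fun_pow (b+1)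
        simpa using this
      have h2 := (h1.inv (by positivity)).const_mul (-((b:ℝ)+1)⁻¹)
      refine h2.congr_deriv ?_
      have hb1 : ((b:ℝ)+1) ≠ 0 := by positivity
      field_simp
      ring
    have hInt : IntegrableOn (fun t : ℝ => t ^ 0 / (x + t) ^ (0 + b + 2)) (Ioi 0) :=
      integrableOn_kernel hx 0 (0+b+2) (by omega)
    have hTend : Tendsto (fun t : ℝ => -((b:ℝ)+1)⁻¹ * ((x + t) ^ (b+1))⁻¹) atTop (𝓝 0) := by
      have := (tendsto_inv_pow_shift x (b+1) (by omega)).const_mul (-((b:ℝ)+1)⁻¹)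
      simpa using this
    rw [integral_Ioi_of_hasDerivAt_of_tendsto' hF hInt hTend]
    have h3 : ((b+1).factorial : ℝ) = ((b:ℝ)+1) * b.factorial := by
      rw [Nat.factorial_succ]; push_cast; ring
    simp only [zero_add, Nat.factorial_zero, Nat.cast_one, one_mul, add_zero]
    rw [h3]
    have hxb : (0:ℝ) < x ^ (b+1) := by positivity
    field_simp
    ring
  | succ a ih =>
    set F : ℝ → ℝ := fun t => t^(a+1) * ((x+t)^(a+b+2))⁻¹ with hFdef
    set f' : ℝ → ℝ := fun t => ((a:ℝ)+1) * (t^a/(x+t)^(a+b+2))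
      - ((a:ℝ)+(b:ℝ)+2) * (t^(a+1)/(x+t)^(a+b+3)) with hf'def
    have hF : ∀ t ∈ Ici (0:ℝ), HasDerivAt F (f' t) t := by
      intro t ht
      have ht0 : (0:ℝ) ≤ t := ht
      have hxt : 0 < x + t := by linarith
      have h1 : HasDerivAt (fun t : ℝ => t^(a+1)) (((a:ℝ)+1) * t^a) t := by
        have := hasDerivAt_pow (a+1) t
        simpa using this
      have h2 : HasDerivAt (fun t : ℝ => (x + t) ^ (a+b+2))
          (((a:ℝ)+(b:ℝ)+2) * (x+t)^(a+b+1)) t := by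
        have := ((hasDerivAt_id t).const_add x).fun_pow (a+b+2)
        simp only [id_eq, show a+b+2-1 = a+b+1 from by omega, mul_one] at this
        refine this.congr_deriv ?_
        push_cast; ring
      have h3 := h1.mul (h2.fun_inv (by positivity))
      refine h3.congr_deriv ?_
      simp only [hf'def]
      have h4 : (x+t) ^ (a+b+2) ≠ 0 := by positivity
      have h5 : (x+t) ^ (a+b+3) ≠ 0 := by positivity
      field_simp
      ring
    have hInt1 : IntegrableOn (fun t : ℝ => t^a/(x+t)^(a+b+2)) (Ioi 0) :=
      integrableOn_kernel hx a _ (by omega)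
    have hInt2 : IntegrableOn (fun t : ℝ => t^(a+1)/(x+t)^(a+b+3)) (Ioi 0) :=
      integrableOn_kernel hx (a+1) _ (by omega)
    have hf'int : IntegrableOn f' (Ioi 0) :=
      (hInt1.const_mul _).sub (hInt2.const_mul _)
    have hTend : Tendsto F atTop (𝓝 0) := by
      apply tendsto_of_tendsto_of_tendsto_of_le_of_le' tendsto_const_nhds
        (tendsto_inv_pow_shift x (b+1) (by omega))
      · filter_upwards [eventually_ge_atTop (0:ℝ)] with t ht
        have hxt : 0 < x + t := by linarith
        simp only [hFdef]
        positivity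
      · filter_upwards [eventually_ge_atTop (0:ℝ)] with t ht
        have hxt : 0 < x + t := by linarith
        simp only [hFdef]
        calc t^(a+1) * ((x+t)^(a+b+2))⁻¹
            ≤ (x+t)^(a+1) * ((x+t)^(a+b+2))⁻¹ := by
              gcongr
              linarith
          _ = ((x+t)^(b+1))⁻¹ := by
              have h9 : (x+t)^(a+b+2) = (x+t)^(a+1) * (x+t)^(b+1) := by
                rw [← pow_add]; congr 1; omega
              rw [h9, mul_inv, ← mul_assoc, mul_inv_cancel₀ (by positivity), one_mul]
    have hEq := integral_Ioi_of_hasDerivAt_of_tendsto' hF hf'int hTend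
    have hF0 : F 0 = 0 := by simp [hFdef]
    rw [hF0, sub_zero, hf'def] at hEq
    rw [integral_sub (hInt1.const_mul _) (hInt2.const_mul _), integral_const_mul,
      integral_const_mul, ih] at hEq
    have hgoal : (∫ t in Ioi (0:ℝ), t ^ (a+1) / (x + t) ^ ((a+1) + b + 2))
        = ∫ t in Ioi (0:ℝ), t ^ (a+1) / (x + t) ^ (a + b + 3) := by
      norm_num [show (a+1)+b+2 = a+b+3 from by omega]
    rw [hgoal]
    have hab2 : (0:ℝ) < (a:ℝ)+(b:ℝ)+2 := by positivity
    have hxb : (0:ℝ) < x ^ (b+1) := by positivity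
    have hafac : (0:ℝ) < (a.factorial : ℝ) := by exact_mod_cast a.factorial_pos
    have habfac : (0:ℝ) < ((a+b+1).factorial : ℝ) := by exact_mod_cast (a+b+1).factorial_pos
    have hJ : (∫ t in Ioi (0:ℝ), t ^ (a+1) / (x + t) ^ (a + b + 3))
        = ((a:ℝ)+1) * ((a.factorial:ℝ) * b.factorial / ((a+b+1).factorial * x^(b+1)))
          / ((a:ℝ)+(b:ℝ)+2) := by
      rw [eq_div_iff (ne_of_gt hab2)]
      linarith [hEq]
    have h10 : (((a+1)).factorial : ℝ) = ((a:ℝ)+1) * a.factorial := by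
      rw [Nat.factorial_succ]; push_cast; ring
    have h11 : ((((a+1)+b+1)).factorial : ℝ) = ((a:ℝ)+(b:ℝ)+2) * (a+b+1).factorial := by
      rw [show (a+1)+b+1 = (a+b+1)+1 from by omega, Nat.factorial_succ]; push_cast; ring
    rw [hJ, h10, h11]
    have hC := habfac.ne'
    have hX := hxb.ne'
    have hA := hab2.ne'
    field_simp

lemma factorial_add_eq (m q : ℕ) :
    (m + q).factorial = m.factorial * ∏ i ∈ Finset.range q, (m + i + 1) := by
  induction q with
  | zero => simp
  | succ q ih =>
    rw [show m + (q+1) = (m+q)+1 from by omega, Nat.factorial_succ, ih,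
      Finset.prod_range_succ]
    ring

lemma fact_ineq (n k p : ℕ) (hk : 1 ≤ k) (hkn : k ≤ n) (hpn : p ≤ n) :
    (n-k+p).factorial * (n-p).factorial ≤ (p+1)^p * ((n-k).factorial * n.factorial) := by
  have h1 := factorial_add_eq (n-k) p
  have h2 := factorial_add_eq (n-p) p
  rw [show n-p+p = n from by omega] at h2
  rw [h1, h2]
  have h3 : (∏ i ∈ Finset.range p, (n-k+i+1)) ≤ ∏ i ∈ Finset.range p, (p+1)*(n-p+i+1) := by
    apply Finset.prod_le_prod'
    intro i _
    calc n-k+i+1 ≤ p + (n-p+i+1) := by omega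
      _ ≤ p*(n-p+i+1) + (n-p+i+1) := by
          exact Nat.add_le_add_right (Nat.le_mul_of_pos_right p (by omega)) _
      _ = (p+1)*(n-p+i+1) := by ring
  rw [Finset.prod_mul_distrib, Finset.prod_const, Finset.card_range] at h3
  calc (n-k).factorial * (∏ i ∈ Finset.range p, (n-k+i+1)) * (n-p).factorial
      = (n-k).factorial * (n-p).factorial * (∏ i ∈ Finset.range p, (n-k+i+1)) := by ring
    _ ≤ (n-k).factorial * (n-p).factorial *
        ((p+1)^p * ∏ i ∈ Finset.range p, (n-p+i+1)) := Nat.mul_le_mul_left _ h3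
    _ = (p+1)^p * ((n-k).factorial * ((n-p).factorial * ∏ i ∈ Finset.range p, (n-p+i+1))) := by
        ring

/-- `M_{n,k}` is a bounded operator on the weighted space:
`w_p(x)|M_{n,k}(f;x)| ≤ N_{p,k}·‖f‖_p`. -/
theorem Mnk_bounded_on_Cp (k p : ℕ) (hk : 1 ≤ k) :
    ∃ N > (0 : ℝ), ∀ n : ℕ, max p k ≤ n → ∀ f : ℝ → ℝ, Measurable f →
      (∃ B : ℝ, ∀ x ≥ (0 : ℝ), wp p x * |f x| ≤ B) →
      ∀ x : ℝ, 0 < x → wp p x * |Mnk n k f x| ≤ N * pNorm p f := by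
  refine ⟨2 * ((p:ℝ)+1)^p, by positivity, ?_⟩
  intro n hn f hmf hBex x hx
  obtain ⟨B, hB⟩ := hBex
  have hpn : p ≤ n := le_trans (le_max_left _ _) hn
  have hkn : k ≤ n := le_trans (le_max_right _ _) hn
  -- basic facts about the weight and the norm
  have hwpos : ∀ t : ℝ, 0 ≤ t → 0 < wp p t := by
    intro t ht
    unfold wp
    split
    · norm_num
    · have h0 : (0:ℝ) ≤ t ^ p := pow_nonneg ht p
      positivity
  have hbdd : BddAbove (Set.range fun y : {y : ℝ // 0 ≤ y} => wp p y.val * |f y.val|) := by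
    refine ⟨B, ?_⟩
    rintro y ⟨⟨t, ht⟩, rfl⟩
    exact hB t ht
  have hPle : ∀ t : ℝ, 0 ≤ t → wp p t * |f t| ≤ pNorm p f := fun t ht =>
    le_ciSup hbdd (⟨t, ht⟩ : {y : ℝ // 0 ≤ y})
  have hP0 : 0 ≤ pNorm p f :=
    le_trans (mul_nonneg (hwpos 0 le_rfl).le (abs_nonneg _)) (hPle 0 le_rfl)
  set P := pNorm p f with hPdef
  have hfle : ∀ t : ℝ, 0 ≤ t → |f t| ≤ P * (1 + t^p) := by
    intro t ht
    have h1 := hPle t ht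
    have htp : (0:ℝ) ≤ t ^ p := pow_nonneg ht p
    unfold wp at h1
    by_cases hp : p = 0
    · rw [if_pos hp] at h1
      rw [one_mul] at h1
      nlinarith
    · rw [if_neg hp] at h1
      have h2 : (0:ℝ) < 1 + t^p := by positivity
      calc |f t| = (1/(1+t^p) * |f t|) * (1+t^p) := by field_simp
        _ ≤ P * (1+t^p) := mul_le_mul_of_nonneg_right h1 h2.le
  -- integrability
  have hint1 : IntegrableOn (fun t : ℝ => t^(n-k)/(x+t)^(2*n-k+2)) (Ioi 0) :=
    integrableOn_kernel hx _ _ (by omega)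
  have hint2 : IntegrableOn (fun t : ℝ => t^(n-k+p)/(x+t)^(2*n-k+2)) (Ioi 0) :=
    integrableOn_kernel hx _ _ (by omega)
  set maj : ℝ → ℝ := fun t => P * (t^(n-k)/(x+t)^(2*n-k+2)) + P * (t^(n-k+p)/(x+t)^(2*n-k+2))
    with hmajdef
  have hmajInt : IntegrableOn maj (Ioi 0) := (hint1.const_mul _).add (hint2.const_mul _)
  set g : ℝ → ℝ := fun t => t^(n-k)/(x+t)^(2*n-k+2) * f t with hgdef
  have hgmeas : AEStronglyMeasurable g (volume.restrict (Ioi 0)) :=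
    (((measurable_id.pow_const _).div
      ((measurable_const.add measurable_id).pow_const _)).mul hmf).aestronglyMeasurable.restrict
  have hbound : ∀ᵐ t ∂(volume.restrict (Ioi (0:ℝ))), ‖g t‖ ≤ maj t := by
    filter_upwards [ae_restrict_mem measurableSet_Ioi] with t ht
    have ht0 : 0 < t := ht
    have hxt : 0 < x + t := by linarith
    have hK : (0:ℝ) ≤ t^(n-k)/(x+t)^(2*n-k+2) := by positivity
    simp only [hgdef, hmajdef, Real.norm_eq_abs, abs_mul, abs_of_nonneg hK]
    calc t^(n-k)/(x+t)^(2*n-k+2) * |f t|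
        ≤ t^(n-k)/(x+t)^(2*n-k+2) * (P * (1 + t^p)) :=
          mul_le_mul_of_nonneg_left (hfle t ht0.le) hK
      _ = P * (t^(n-k)/(x+t)^(2*n-k+2)) + P * (t^(n-k+p)/(x+t)^(2*n-k+2)) := by
          rw [pow_add]; ring
  have hgint : IntegrableOn g (Ioi 0) := Integrable.mono' hmajInt hgmeas hbound
  have habs : |∫ t in Ioi (0:ℝ), g t| ≤ ∫ t in Ioi (0:ℝ), maj t := by
    calc |∫ t in Ioi (0:ℝ), g t| ≤ ∫ t in Ioi (0:ℝ), |g t| := by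
          simpa [Real.norm_eq_abs] using norm_integral_le_integral_norm (μ := volume.restrict (Ioi 0)) g
      _ ≤ ∫ t in Ioi (0:ℝ), maj t := by
          apply integral_mono_ae hgint.abs hmajInt
          filter_upwards [hbound] with t ht
          simpa [Real.norm_eq_abs] using ht
  -- values of the kernel integrals
  have e1 : 2*n-k+2 = (n-k) + n + 2 := by omega
  have e3 : 2*n-k+1 = (n-k) + n + 1 := by omega
  have e2 : 2*n-k+2 = (n-k+p) + (n-p) + 2 := by omega
  have e4 : 2*n-k+1 = (n-k+p) + (n-p) + 1 := by omega
  have hJ1 : ∫ t in Ioi (0:ℝ), t^(n-k)/(x+t)^(2*n-k+2)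
      = (((n-k).factorial : ℝ) * n.factorial)/(((2*n-k+1).factorial) * x^(n+1)) := by
    rw [e1, e3]
    exact integral_kernel x hx n (n-k)
  have hJ2 : ∫ t in Ioi (0:ℝ), t^(n-k+p)/(x+t)^(2*n-k+2)
      = (((n-k+p).factorial : ℝ) * (n-p).factorial)/(((2*n-k+1).factorial) * x^(n-p+1)) := by
    rw [e2, e4]
    exact integral_kernel x hx (n-p) (n-k+p)
  have hIntMaj : ∫ t in Ioi (0:ℝ), maj t
      = P * ((((n-k).factorial : ℝ) * n.factorial)/(((2*n-k+1).factorial) * x^(n+1)))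
        + P * ((((n-k+p).factorial : ℝ) * (n-p).factorial)/(((2*n-k+1).factorial) * x^(n-p+1))) := by
    simp only [hmajdef]
    rw [integral_add (hint1.const_mul _) (hint2.const_mul _), integral_const_mul,
      integral_const_mul, hJ1, hJ2]
  -- prefactor computations
  set pre : ℝ := ((2 * n - k + 1).factorial : ℝ) * x ^ (n + 1) /
      ((n.factorial : ℝ) * ((n - k).factorial : ℝ)) with hpredef
  have hfac1 : (0:ℝ) < ((2*n-k+1).factorial : ℝ) := by exact_mod_cast (2*n-k+1).factorial_pos
  have hfac2 : (0:ℝ) < (n.factorial : ℝ) := by exact_mod_cast n.factorial_pos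
  have hfac3 : (0:ℝ) < ((n-k).factorial : ℝ) := by exact_mod_cast (n-k).factorial_pos
  have hfac4 : (0:ℝ) < ((n-k+p).factorial : ℝ) := by exact_mod_cast (n-k+p).factorial_pos
  have hfac5 : (0:ℝ) < ((n-p).factorial : ℝ) := by exact_mod_cast (n-p).factorial_pos
  have hpre : 0 < pre := by rw [hpredef]; positivity
  have hpreJ1 : pre * ((((n-k).factorial : ℝ) * n.factorial)/(((2*n-k+1).factorial) * x^(n+1)))
      = 1 := by
    rw [hpredef]
    field_simp
  set Cnk : ℝ := (((n-k+p).factorial : ℝ) * (n-p).factorial)/(((n-k).factorial : ℝ) * n.factorial)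
    with hCdef
  have hpreJ2 : pre * ((((n-k+p).factorial : ℝ) * (n-p).factorial)/(((2*n-k+1).factorial) * x^(n-p+1)))
      = Cnk * x^p := by
    rw [hpredef, hCdef, show n+1 = (n-p+1)+p from by omega, pow_add]
    field_simp
  have hCnk : Cnk ≤ ((p:ℝ)+1)^p := by
    rw [hCdef, div_le_iff₀ (by positivity)]
    have h := fact_ineq n k p hk hkn hpn
    have h2 : (((n-k+p).factorial * (n-p).factorial : ℕ) : ℝ)
        ≤ (((p+1)^p * ((n-k).factorial * n.factorial) : ℕ) : ℝ) := Nat.cast_le.mpr h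
    push_cast at h2
    calc (((n-k+p).factorial : ℝ) * (n-p).factorial)
        ≤ ((p:ℝ)+1)^p * (((n-k).factorial : ℝ) * n.factorial) := h2
      _ = ((p:ℝ)+1)^p * (((n-k).factorial : ℝ) * n.factorial) := rfl
  have hCnk0 : 0 ≤ Cnk := by rw [hCdef]; positivity
  -- final estimate
  have hxp : (0:ℝ) ≤ x^p := by positivity
  have h1p : (1:ℝ) ≤ ((p:ℝ)+1)^p := one_le_pow₀ (by linarith [show (0:ℝ) ≤ (p:ℝ) from Nat.cast_nonneg p])
  have hw2 : wp p x * (1 + x^p) ≤ 2 := by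
    unfold wp
    split
    · next hp0 => subst hp0; norm_num
    · have h2 : (0:ℝ) < 1 + x^p := by positivity
      rw [one_div, inv_mul_cancel₀ h2.ne']
      norm_num
  have hwx : 0 ≤ wp p x := (hwpos x hx.le).le
  have hMnk : |Mnk n k f x| ≤ pre * ∫ t in Ioi (0:ℝ), maj t := by
    rw [Mnk, ← hpredef, abs_mul, abs_of_pos hpre]
    exact mul_le_mul_of_nonneg_left habs hpre.le
  calc wp p x * |Mnk n k f x| ≤ wp p x * (pre * ∫ t in Ioi (0:ℝ), maj t) :=
        mul_le_mul_of_nonneg_left hMnk hwx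
    _ = wp p x * (P * (1 + Cnk * x^p)) := by
        rw [hIntMaj, mul_add, show pre * (P * ((((n-k).factorial : ℝ) * n.factorial)/(((2*n-k+1).factorial) * x^(n+1)))) = P * (pre * ((((n-k).factorial : ℝ) * n.factorial)/(((2*n-k+1).factorial) * x^(n+1)))) from by ring,
          show pre * (P * ((((n-k+p).factorial : ℝ) * (n-p).factorial)/(((2*n-k+1).factorial) * x^(n-p+1)))) = P * (pre * ((((n-k+p).factorial : ℝ) * (n-p).factorial)/(((2*n-k+1).factorial) * x^(n-p+1)))) from by ring,
          hpreJ1, hpreJ2]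
        ring
    _ ≤ wp p x * (P * (((p:ℝ)+1)^p * (1 + x^p))) := by
        apply mul_le_mul_of_nonneg_left _ hwx
        apply mul_le_mul_of_nonneg_left _ hP0
        calc 1 + Cnk * x^p ≤ ((p:ℝ)+1)^p + ((p:ℝ)+1)^p * x^p :=
              add_le_add h1p (mul_le_mul_of_nonneg_right hCnk hxp)
          _ = ((p:ℝ)+1)^p * (1 + x^p) := by ring
    _ = ((p:ℝ)+1)^p * P * (wp p x * (1 + x^p)) := by ring
    _ ≤ ((p:ℝ)+1)^p * P * 2 := by
        apply mul_le_mul_of_nonneg_left hw2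
        positivity
    _ = 2 * ((p:ℝ)+1)^p * P := by ring
end

section
/- Let k ≥ 1 and p ≥ 0 be fixed integers. Then there exists a constant N_{p,k} > 0 such that for all integers n ≥ k + p + 2 and all x > 0, w_p(x) · M_{n,k}( (t−x)²/w_p(t); x ) ≤ N_{p,k} · x²/n, where the operator is applied to the function t ↦ (t−x)²·(1+t^p) for p ≥ 1 and t ↦ (t−x)² for p = 0. -/
open MeasureTheory Set

open Filter Topology

set_option maxHeartbeats 1000000

lemma intOn_aux (x : ℝ) (hx : 0 < x) (a b : ℕ) (hab : a + 2 ≤ b) :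
    IntegrableOn (fun t : ℝ => t ^ a / (x + t) ^ b) (Ioi 0) := by
  have hcont : ContinuousOn (fun t : ℝ => t ^ a / (x + t) ^ b) (Ici 0) := by
    apply ContinuousOn.div (by fun_prop) (by fun_prop)
    intro t ht
    have h0 : (0:ℝ) ≤ t := ht
    positivity
  have h1 : IntegrableOn (fun t : ℝ => t ^ a / (x + t) ^ b) (Ioc 0 1) :=
    ((hcont.mono (Icc_subset_Ici_self)).integrableOn_compact isCompact_Icc).mono_set
      Ioc_subset_Icc_self
  have h2 : IntegrableOn (fun t : ℝ => t ^ a / (x + t) ^ b) (Ioi 1) := by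
    have hg : IntegrableOn (fun t : ℝ => t ^ (-2 : ℝ)) (Ioi 1) :=
      integrableOn_Ioi_rpow_of_lt (by norm_num) one_pos
    refine hg.integrable.mono' ((hcont.mono ?_).aestronglyMeasurable measurableSet_Ioi) ?_
    · intro t ht; exact le_of_lt (lt_of_lt_of_le one_pos (le_of_lt (mem_Ioi.mp ht)))
    · filter_upwards [ae_restrict_mem measurableSet_Ioi] with t ht
      have h1t : (1:ℝ) < t := ht
      have h0t : (0:ℝ) < t := lt_trans one_pos h1t
      have hxt : (0:ℝ) < x + t := by linarith
      rw [Real.norm_eq_abs, abs_of_nonneg (by positivity)]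
      have step1 : t ^ a / (x + t) ^ b ≤ t ^ a / t ^ b := by
        apply div_le_div_of_nonneg_left (by positivity) (by positivity)
        exact pow_le_pow_left₀ (le_of_lt h0t) (by linarith) b
      have step2 : t ^ a / t ^ b ≤ (t ^ 2)⁻¹ := by
        rw [div_le_iff₀ (by positivity), inv_mul_eq_div, le_div_iff₀ (by positivity)]
        calc t ^ a * t ^ 2 = t ^ (a + 2) := by rw [pow_add]
          _ ≤ t ^ b := pow_le_pow_right₀ (le_of_lt h1t) hab
      have step3 : (t ^ 2)⁻¹ = t ^ (-2 : ℝ) := by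
        rw [show (-2 : ℝ) = -((2:ℕ):ℝ) by norm_num, Real.rpow_neg (le_of_lt h0t),
          Real.rpow_natCast]
      linarith [step1.trans (step2.trans_eq step3)]
  have : Ioi (0:ℝ) ⊆ Ioc 0 1 ∪ Ioi 1 := by
    intro t ht
    rcases le_or_gt t 1 with h | h
    · exact Or.inl ⟨ht, h⟩
    · exact Or.inr h
  exact (h1.union h2).mono_set this

lemma tendsto_inv_pow_atTop (x : ℝ) (d : ℕ) :
    Tendsto (fun t : ℝ => ((x + t) ^ (d + 1))⁻¹) atTop (𝓝 0) := by
  apply Filter.Tendsto.inv_tendsto_atTop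
  exact (tendsto_pow_atTop (Nat.succ_ne_zero d)).comp
    (tendsto_atTop_add_const_left _ x tendsto_id)

lemma integral_pow_div (x : ℝ) (hx : 0 < x) :
    ∀ a b : ℕ, a + 2 ≤ b →
      ∫ t in Ioi (0:ℝ), t ^ a / (x + t) ^ b =
        ((a.factorial : ℝ) * ((b - a - 2).factorial) / ((b - 1).factorial)) *
          x ^ (a + 1) / x ^ b := by
  intro a
  induction a with
  | zero =>
    intro b hb
    obtain ⟨d, rfl⟩ : ∃ d, b = d + 2 := ⟨b - 2, by omega⟩
    have hderiv : ∀ t ∈ Ici (0:ℝ),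
        HasDerivAt (fun t : ℝ => -(((x + t) ^ (d + 1))⁻¹ / ((d:ℝ) + 1)))
          (t ^ 0 / (x + t) ^ (d + 2)) t := by
      intro t ht
      have hxt : x + t ≠ 0 := by have : (0:ℝ) ≤ t := ht; positivity
      have h1 : HasDerivAt (fun t : ℝ => x + t) 1 t := (hasDerivAt_id t).const_add x
      have h2 : HasDerivAt (fun t : ℝ => (x + t) ^ (d + 1))
          ((((d:ℝ) + 1)) * (x + t) ^ d * 1) t := by
        simpa using h1.fun_pow (d + 1)
      have h3 := (h2.inv (pow_ne_zero _ hxt)).div_const ((d:ℝ) + 1)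
      have h4 := h3.fun_neg
      refine h4.congr_deriv ?_
      have hd1 : ((d:ℝ) + 1) ≠ 0 := by positivity
      field_simp
      ring
    have htend : Tendsto (fun t : ℝ => -(((x + t) ^ (d + 1))⁻¹ / ((d:ℝ) + 1))) atTop (𝓝 0) := by
      have := (tendsto_inv_pow_atTop x d).div_const ((d:ℝ) + 1)
      simpa using this.neg
    have key := integral_Ioi_of_hasDerivAt_of_tendsto' hderiv
      (intOn_aux x hx 0 (d + 2) (by omega)) htend
    rw [key]
    have e1 : d + 2 - 0 - 2 = d := by omega
    have e2 : d + 2 - 1 = d + 1 := by omega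
    rw [e1, e2, Nat.factorial_succ]
    have hd1 : ((d:ℝ) + 1) ≠ 0 := by positivity
    have hf : ((d.factorial : ℝ)) ≠ 0 := by positivity
    push_cast
    rw [pow_add]
    field_simp
    ring
  | succ a ih =>
    intro b hb
    obtain ⟨d, rfl⟩ : ∃ d, b = d + a + 3 := ⟨b - a - 3, by omega⟩
    set F : ℝ → ℝ := fun t => t ^ (a + 1) * ((x + t) ^ (d + a + 2))⁻¹ with hF
    set F' : ℝ → ℝ := fun t =>
      ((a:ℝ) + 1) * (t ^ a / (x + t) ^ (d + a + 2)) -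
        ((d:ℝ) + (a:ℝ) + 2) * (t ^ (a + 1) / (x + t) ^ (d + a + 3)) with hF'
    have hderiv : ∀ t ∈ Ici (0:ℝ), HasDerivAt F (F' t) t := by
      intro t ht
      have hxt : x + t ≠ 0 := by have : (0:ℝ) ≤ t := ht; positivity
      have h1 : HasDerivAt (fun t : ℝ => x + t) 1 t := (hasDerivAt_id t).const_add x
      have h2 : HasDerivAt (fun t : ℝ => (x + t) ^ (d + a + 2))
          ((((d:ℝ) + (a:ℝ) + 2)) * (x + t) ^ (d + a + 1) * 1) t := by
        have := h1.fun_pow (d + a + 2)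
        refine this.congr_deriv ?_
        rw [show d + a + 2 - 1 = d + a + 1 by omega]; push_cast; ring
      have h3 := (hasDerivAt_pow (a + 1) t).mul (h2.inv (pow_ne_zero _ hxt))
      refine h3.congr_deriv ?_
      have ha1 : ((a:ℝ) + 1) ≠ 0 := by positivity
      simp only [hF', Pi.inv_apply]
      push_cast
      field_simp
      ring
    have hFbound : ∀ t : ℝ, 0 ≤ t → F t ≤ ((x + t) ^ (d + 1))⁻¹ := by
      intro t ht
      have hxt : (0:ℝ) < x + t := by linarith
      rw [hF]
      have h1 : t ^ (a + 1) ≤ (x + t) ^ (a + 1) :=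
        pow_le_pow_left₀ ht (by linarith) _
      calc t ^ (a + 1) * ((x + t) ^ (d + a + 2))⁻¹
          ≤ (x + t) ^ (a + 1) * ((x + t) ^ (d + a + 2))⁻¹ := by
            apply mul_le_mul_of_nonneg_right h1 (by positivity)
        _ = ((x + t) ^ (d + 1))⁻¹ := by
            rw [show d + a + 2 = (d + 1) + (a + 1) by omega, pow_add]
            field_simp
            ring
    have htend : Tendsto F atTop (𝓝 0) := by
      apply squeeze_zero' (g := fun t : ℝ => ((x + t) ^ (d + 1))⁻¹)
      · filter_upwards [eventually_ge_atTop (0:ℝ)] with t ht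
        have hxt : (0:ℝ) < x + t := by linarith
        rw [hF]; positivity
      · filter_upwards [eventually_ge_atTop (0:ℝ)] with t ht
        exact hFbound t ht
      · exact tendsto_inv_pow_atTop x d
    have i1 : IntegrableOn (fun t : ℝ => t ^ a / (x + t) ^ (d + a + 2)) (Ioi 0) :=
      intOn_aux x hx a (d + a + 2) (by omega)
    have i2 : IntegrableOn (fun t : ℝ => t ^ (a + 1) / (x + t) ^ (d + a + 3)) (Ioi 0) :=
      intOn_aux x hx (a + 1) (d + a + 3) (by omega)
    have hint : IntegrableOn F' (Ioi 0) := (i1.const_mul _).sub (i2.const_mul _)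
    have key := integral_Ioi_of_hasDerivAt_of_tendsto' hderiv hint htend
    have hF0 : F 0 = 0 := by simp [hF]
    rw [hF0, sub_zero] at key
    rw [hF', integral_sub (i1.const_mul _) (i2.const_mul _), integral_const_mul,
      integral_const_mul] at key
    rw [ih (d + a + 2) (by omega)] at key
    have e1 : d + a + 2 - a - 2 = d := by omega
    have e2 : d + a + 2 - 1 = d + a + 1 := by omega
    rw [e1, e2] at key
    have e3 : d + a + 3 - (a + 1) - 2 = d := by omega
    have e4 : d + a + 3 - 1 = d + a + 2 := by omega
    rw [e3, e4]
    have hda : ((d:ℝ) + (a:ℝ) + 2) ≠ 0 := by positivity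
    have hsolve : ∫ t in Ioi (0:ℝ), t ^ (a + 1) / (x + t) ^ (d + a + 3) =
        (((a:ℝ) + 1) * ((a.factorial : ℝ) * (d.factorial : ℝ) / ((d + a + 1).factorial : ℝ) *
          x ^ (a + 1) / x ^ (d + a + 2))) / ((d:ℝ) + (a:ℝ) + 2) := by
      field_simp at key ⊢
      linarith
    rw [hsolve]
    have f1 : ((a + 1).factorial : ℝ) = ((a:ℝ) + 1) * (a.factorial : ℝ) := by
      rw [Nat.factorial_succ]; push_cast; ring
    have f2 : ((d + a + 2).factorial : ℝ) = ((d:ℝ) + (a:ℝ) + 2) * ((d + a + 1).factorial : ℝ) := by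
      rw [show d + a + 2 = (d + a + 1) + 1 by omega, Nat.factorial_succ]; push_cast; ring
    have g1 : x ^ (a + 1 + 1) = x * x ^ (a + 1) := by ring
    have g2 : x ^ (d + a + 3) = x * x ^ (d + a + 2) := by ring
    rw [f1, f2, g1, g2]
    have hfd : ((d + a + 1).factorial : ℝ) ≠ 0 := by positivity
    have hx' : x ≠ 0 := ne_of_gt hx
    field_simp

private lemma aux_bra (q k n m : ℝ) (hq0 : 0 ≤ q) (hk0 : 0 ≤ k) (hn1 : 1 ≤ n) (hmn : m ≤ n) :
    (2 * q + 2 - k) ^ 2 + (n + m) ≤ ((2 * q + 2) ^ 2 + k ^ 2 + 2) * n := by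
  have h1 : (2 * q + 2 - k) ^ 2 ≤ (2 * q + 2) ^ 2 + k ^ 2 := by
    nlinarith [mul_nonneg (show (0:ℝ) ≤ 2 * q + 2 by linarith) hk0]
  have h2 : (2 * q + 2) ^ 2 + k ^ 2 ≤ ((2 * q + 2) ^ 2 + k ^ 2) * n :=
    le_mul_of_one_le_right (by positivity) hn1
  nlinarith [h1, h2]

private lemma aux_cu (q u n : ℝ) (hq0 : 0 ≤ q) (hnn : n = u + q + 2) (hu1 : 1 ≤ u) :
    2 * n ≤ (q + 3) * (u + 1) ∧ 2 * n ≤ (q + 3) * (u + 2) := by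
  constructor <;> nlinarith [mul_nonneg hq0 (sub_nonneg.mpr hu1)]

/-- ratio bound for factorials -/
lemma ratio_bound (n k q : ℕ) (hk : 1 ≤ k) (hn : k + q + 2 ≤ n) :
    (((n - k + q).factorial : ℝ) * ((n - q).factorial : ℝ)) /
      ((n.factorial : ℝ) * ((n - k).factorial : ℝ)) ≤ ((q:ℝ) + 3) ^ q := by
  set m := n - k with hm
  have hmn : n = m + k := by omega
  have d1 : ((m + q).factorial : ℝ) = ((m + q).descFactorial q : ℝ) * (m.factorial : ℝ) := by
    have := Nat.factorial_mul_descFactorial (show q ≤ m + q by omega)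
    rw [show m + q - q = m by omega] at this
    have := congrArg (Nat.cast : ℕ → ℝ) this.symm
    push_cast at this
    linarith
  have d2 : ((n).factorial : ℝ) = ((n - q).factorial : ℝ) * (n.descFactorial q : ℝ) := by
    have := Nat.factorial_mul_descFactorial (show q ≤ n by omega)
    exact_mod_cast congrArg (Nat.cast : ℕ → ℝ) this.symm
  have hq : n - k + q = m + q := by omega
  rw [hq, d1, d2]
  have hdN : (0:ℝ) < (n.descFactorial q : ℝ) := by
    have : n.descFactorial q ≠ 0 := by
      intro h
      have := Nat.descFactorial_eq_zero_iff_lt.mp h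
      omega
    exact_mod_cast Nat.pos_of_ne_zero this
  have hfm : (0:ℝ) < (m.factorial : ℝ) := by exact_mod_cast m.factorial_pos
  have hfnq : (0:ℝ) < ((n - q).factorial : ℝ) := by exact_mod_cast (n - q).factorial_pos
  have heq : (((m + q).descFactorial q : ℝ) * (m.factorial : ℝ)) * ((n - q).factorial : ℝ) /
      ((((n - q).factorial : ℝ) * (n.descFactorial q : ℝ)) * (m.factorial : ℝ)) =
      ((m + q).descFactorial q : ℝ) / (n.descFactorial q : ℝ) := by
    field_simp
  rw [heq]
  have hup : ((m + q).descFactorial q : ℝ) ≤ ((m + q : ℕ) : ℝ) ^ q := by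
    exact_mod_cast Nat.descFactorial_le_pow (m + q) q
  have hlo : (((n + 1 - q : ℕ) : ℝ)) ^ q ≤ (n.descFactorial q : ℝ) := by
    exact_mod_cast Nat.pow_sub_le_descFactorial n q
  have hden : (0:ℝ) < (((n + 1 - q : ℕ) : ℝ)) ^ q := by
    have : 0 < n + 1 - q := by omega
    positivity
  calc ((m + q).descFactorial q : ℝ) / (n.descFactorial q : ℝ)
      ≤ ((m + q : ℕ) : ℝ) ^ q / (((n + 1 - q : ℕ) : ℝ)) ^ q := by
        apply div_le_div₀ (by positivity) hup hden hlo
    _ = (((m + q : ℕ) : ℝ) / ((n + 1 - q : ℕ) : ℝ)) ^ q := by rw [div_pow]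
    _ ≤ ((q:ℝ) + 3) ^ q := by
        apply pow_le_pow_left₀ (by positivity)
        rw [div_le_iff₀ (by exact_mod_cast (by omega : 0 < n + 1 - q))]
        have h1 : ((m + q : ℕ) : ℝ) = (m : ℝ) + q := by push_cast; ring
        have h2 : ((n + 1 - q : ℕ) : ℝ) = (n : ℝ) + 1 - q := by
          have : ((n + 1 - q : ℕ) : ℝ) = ((n + 1 : ℕ) : ℝ) - (q : ℝ) := by
            have hq2 : q ≤ n + 1 := by omega
            push_cast [Nat.cast_sub hq2]
            ring
          rw [this]; push_cast; ring
        rw [h1, h2]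
        have hm2 : (m : ℝ) ≤ (n : ℝ) := by exact_mod_cast (by omega : m ≤ n)
        have hn2 : ((q:ℝ)) + 3 ≤ (n : ℝ) + 1 := by exact_mod_cast (by omega : q + 3 ≤ n + 1)
        have hq0 : (0:ℝ) ≤ (q:ℝ) := by positivity
        nlinarith [hq0, hm2, hn2]

lemma moment_bound (n k q : ℕ) (hk : 1 ≤ k) (hn : k + q + 2 ≤ n) (x : ℝ) (hx : 0 < x) :
    IntegrableOn (fun t : ℝ => t ^ (n - k) / (x + t) ^ (2 * n - k + 2) * ((t - x) ^ 2 * t ^ q))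
      (Ioi 0) ∧
    (((2 * n - k + 1).factorial : ℝ) * x ^ (n + 1) /
        ((n.factorial : ℝ) * ((n - k).factorial : ℝ))) *
      ∫ t in Ioi (0:ℝ), t ^ (n - k) / (x + t) ^ (2 * n - k + 2) * ((t - x) ^ 2 * t ^ q)
      ≤ ((q:ℝ) + 3) ^ (q + 2) * ((2 * (q:ℝ) + 2) ^ 2 + (k:ℝ) ^ 2 + 2) / 4 * x ^ (q + 2) / n := by
  set m := n - k with hm
  have hmn : n = m + k := by omega
  have e1 : 2 * n - k + 2 = n + m + 2 := by omega
  have e2 : 2 * n - k + 1 = n + m + 1 := by omega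
  rw [e1, e2]
  -- integrability pieces
  have i0 : IntegrableOn (fun t : ℝ => t ^ (m + q) / (x + t) ^ (n + m + 2)) (Ioi 0) :=
    intOn_aux x hx _ _ (by omega)
  have i1 : IntegrableOn (fun t : ℝ => t ^ (m + (q + 1)) / (x + t) ^ (n + m + 2)) (Ioi 0) :=
    intOn_aux x hx _ _ (by omega)
  have i2 : IntegrableOn (fun t : ℝ => t ^ (m + (q + 2)) / (x + t) ^ (n + m + 2)) (Ioi 0) :=
    intOn_aux x hx _ _ (by omega)
  have hfun : (fun t : ℝ => t ^ m / (x + t) ^ (n + m + 2) * ((t - x) ^ 2 * t ^ q)) =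
      fun t : ℝ => (t ^ (m + (q + 2)) / (x + t) ^ (n + m + 2) -
        (2 * x) * (t ^ (m + (q + 1)) / (x + t) ^ (n + m + 2))) +
        x ^ 2 * (t ^ (m + q) / (x + t) ^ (n + m + 2)) := by
    funext t
    ring
  have hintc : IntegrableOn (fun t : ℝ =>
      (t ^ (m + (q + 2)) / (x + t) ^ (n + m + 2) -
        (2 * x) * (t ^ (m + (q + 1)) / (x + t) ^ (n + m + 2))) +
        x ^ 2 * (t ^ (m + q) / (x + t) ^ (n + m + 2))) (Ioi 0) :=
    (i2.sub (i1.const_mul _)).add (i0.const_mul _)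
  constructor
  · rw [hfun]; exact hintc
  have j2 : Integrable (fun t : ℝ => t ^ (m + (q + 2)) / (x + t) ^ (n + m + 2) -
      (2 * x) * (t ^ (m + (q + 1)) / (x + t) ^ (n + m + 2))) (volume.restrict (Ioi 0)) :=
    i2.sub (i1.const_mul _)
  have j0 : Integrable (fun t : ℝ => x ^ 2 * (t ^ (m + q) / (x + t) ^ (n + m + 2)))
      (volume.restrict (Ioi 0)) := i0.const_mul _
  rw [hfun, integral_add j2 j0, integral_sub i2 (i1.const_mul _), integral_const_mul,
    integral_const_mul]
  -- values
  have hval : ∀ j : ℕ, j ≤ n →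
      ∫ t in Ioi (0:ℝ), t ^ (m + j) / (x + t) ^ (n + m + 2) =
        (((m + j).factorial : ℝ) * ((n - j).factorial : ℝ) / ((n + m + 1).factorial : ℝ)) *
          x ^ (m + j + 1) / x ^ (n + m + 2) := by
    intro j hj
    rw [integral_pow_div x hx (m + j) (n + m + 2) (by omega)]
    rw [show n + m + 2 - (m + j) - 2 = n - j by omega, show n + m + 2 - 1 = n + m + 1 by omega]
  -- define R j
  set C : ℝ := ((n + m + 1).factorial : ℝ) * x ^ (n + 1) /
    ((n.factorial : ℝ) * (m.factorial : ℝ)) with hC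
  have hxne : x ≠ 0 := ne_of_gt hx
  have hfn : ((n.factorial : ℝ)) ≠ 0 := by positivity
  have hfm : ((m.factorial : ℝ)) ≠ 0 := by positivity
  have hfnm : (((n + m + 1).factorial : ℝ)) ≠ 0 := by positivity
  have hCJ : ∀ j : ℕ,
      C * ((((m + j).factorial : ℝ) * ((n - j).factorial : ℝ) / ((n + m + 1).factorial : ℝ)) *
          x ^ (m + j + 1) / x ^ (n + m + 2)) =
        (((m + j).factorial : ℝ) * ((n - j).factorial : ℝ) /
          ((n.factorial : ℝ) * (m.factorial : ℝ))) * x ^ j := by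
    intro j
    have hxp : x ^ (n + 1) * x ^ (m + j + 1) = x ^ j * x ^ (n + m + 2) := by
      rw [← pow_add, ← pow_add]
      congr 1
      omega
    rw [hC]
    field_simp
    linear_combination (((m + j).factorial : ℝ) * ((n - j).factorial : ℝ) *
      ((n + m + 1).factorial : ℝ)) * hxp
  -- abbreviate the three integrals
  set I2 := ∫ t in Ioi (0:ℝ), t ^ (m + (q + 2)) / (x + t) ^ (n + m + 2) with hI2
  set I1 := ∫ t in Ioi (0:ℝ), t ^ (m + (q + 1)) / (x + t) ^ (n + m + 2) with hI1
  set I0 := ∫ t in Ioi (0:ℝ), t ^ (m + q) / (x + t) ^ (n + m + 2) with hI0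
  have val2 : C * I2 = (((m + (q + 2)).factorial : ℝ) * ((n - (q + 2)).factorial : ℝ) /
      ((n.factorial : ℝ) * (m.factorial : ℝ))) * x ^ (q + 2) := by
    rw [hI2, hval (q + 2) (by omega)]; exact hCJ (q + 2)
  have val1 : C * I1 = (((m + (q + 1)).factorial : ℝ) * ((n - (q + 1)).factorial : ℝ) /
      ((n.factorial : ℝ) * (m.factorial : ℝ))) * x ^ (q + 1) := by
    rw [hI1, hval (q + 1) (by omega)]; exact hCJ (q + 1)
  have val0 : C * I0 = (((m + q).factorial : ℝ) * ((n - q).factorial : ℝ) /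
      ((n.factorial : ℝ) * (m.factorial : ℝ))) * x ^ q := by
    rw [hI0, hval q (by omega)]; exact hCJ q
  set u : ℕ := n - q - 2 with hu
  have hnu : n = u + q + 2 := by omega
  have hu1 : 1 ≤ u := by omega
  have eq2 : n - (q + 2) = u := by omega
  have eq1 : n - (q + 1) = u + 1 := by omega
  have eq0 : n - q = u + 2 := by omega
  have em2 : m + (q + 2) = m + q + 2 := by omega
  have em1 : m + (q + 1) = m + q + 1 := by omega
  rw [eq2, em2] at val2
  rw [eq1, em1] at val1
  rw [eq0] at val0
  -- the second difference of the ratios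
  set R2 : ℝ := ((m + q + 2).factorial : ℝ) * (u.factorial : ℝ) /
    ((n.factorial : ℝ) * (m.factorial : ℝ)) with hR2
  set R1 : ℝ := ((m + q + 1).factorial : ℝ) * ((u + 1).factorial : ℝ) /
    ((n.factorial : ℝ) * (m.factorial : ℝ)) with hR1
  set R0 : ℝ := ((m + q).factorial : ℝ) * ((u + 2).factorial : ℝ) /
    ((n.factorial : ℝ) * (m.factorial : ℝ)) with hR0
  have lhs_eq : C * (I2 - 2 * x * I1 + x ^ 2 * I0) = x ^ (q + 2) * (R2 - 2 * R1 + R0) := by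
    have h : C * (I2 - 2 * x * I1 + x ^ 2 * I0) =
        (C * I2) - 2 * x * (C * I1) + x ^ 2 * (C * I0) := by ring
    rw [h, val2, val1, val0, hR2, hR1, hR0]
    ring
  rw [lhs_eq]
  -- exact identity for the second difference
  set G : ℝ := ((m + q).factorial : ℝ) * (u.factorial : ℝ) /
    ((n.factorial : ℝ) * (m.factorial : ℝ)) with hG
  have f1 : ((m + q + 2).factorial : ℝ) =
      ((m:ℝ) + q + 2) * ((m:ℝ) + q + 1) * ((m + q).factorial : ℝ) := by
    rw [show m + q + 2 = (m + q + 1) + 1 by omega, Nat.factorial_succ,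
      show m + q + 1 = (m + q) + 1 by omega, Nat.factorial_succ]
    push_cast; ring
  have f2 : ((m + q + 1).factorial : ℝ) = ((m:ℝ) + q + 1) * ((m + q).factorial : ℝ) := by
    rw [show m + q + 1 = (m + q) + 1 by omega, Nat.factorial_succ]; push_cast; ring
  have f3 : (((u + 2).factorial : ℝ)) = ((u:ℝ) + 2) * ((u:ℝ) + 1) * (u.factorial : ℝ) := by
    rw [show u + 2 = (u + 1) + 1 by omega, Nat.factorial_succ, Nat.factorial_succ]
    push_cast; ring
  have f4 : (((u + 1).factorial : ℝ)) = ((u:ℝ) + 1) * (u.factorial : ℝ) := by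
    rw [Nat.factorial_succ]; push_cast; ring
  have hn' : (n:ℝ) = (m:ℝ) + (k:ℝ) := by exact_mod_cast congrArg (Nat.cast : ℕ → ℝ) hmn
  have hu' : (u:ℝ) = (m:ℝ) + (k:ℝ) - (q:ℝ) - 2 := by
    have : (u:ℝ) + (q:ℝ) + 2 = (n:ℝ) := by exact_mod_cast (congrArg (Nat.cast : ℕ → ℝ) hnu).symm
    rw [hn'] at this; linarith
  have hDeq : R2 - 2 * R1 + R0 =
      G * ((2 * (q:ℝ) + 2 - (k:ℝ)) ^ 2 + ((n:ℝ) + (m:ℝ))) := by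
    rw [hR2, hR1, hR0, hG, f1, f2, f3, f4, hn', hu']
    field_simp
    ring
  rw [hDeq]
  -- bounds
  have hfn' : (0:ℝ) < (n.factorial : ℝ) := by exact_mod_cast n.factorial_pos
  have hfm' : (0:ℝ) < (m.factorial : ℝ) := by exact_mod_cast m.factorial_pos
  have hGpos : 0 ≤ G := by rw [hG]; positivity
  have hbra_pos : 0 ≤ (2 * (q:ℝ) + 2 - (k:ℝ)) ^ 2 + ((n:ℝ) + (m:ℝ)) := by positivity
  -- G ≤ (q+3)^q / ((u+1)(u+2))
  have hratio : R0 ≤ ((q:ℝ) + 3) ^ q := by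
    have := ratio_bound n k q hk hn
    rw [show n - k + q = m + q by omega, eq0] at this
    exact this
  have hG_eq : G * (((u:ℝ) + 1) * ((u:ℝ) + 2)) = R0 := by
    rw [hG, hR0, f3]
    field_simp
  have huu : (0:ℝ) < ((u:ℝ) + 1) * ((u:ℝ) + 2) := by positivity
  have hGle : G ≤ ((q:ℝ) + 3) ^ q / (((u:ℝ) + 1) * ((u:ℝ) + 2)) := by
    rw [le_div_iff₀ huu]
    rw [hG_eq]; exact hratio
  -- bracket ≤ cA * n
  have hq0 : (0:ℝ) ≤ (q:ℝ) := by positivity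
  have hk0 : (0:ℝ) ≤ (k:ℝ) := by positivity
  have hn1 : (1:ℝ) ≤ (n:ℝ) := by exact_mod_cast (by omega : 1 ≤ n)
  have hmn' : (m:ℝ) ≤ (n:ℝ) := by exact_mod_cast (by omega : m ≤ n)
  have hbra : (2 * (q:ℝ) + 2 - (k:ℝ)) ^ 2 + ((n:ℝ) + (m:ℝ)) ≤
      ((2 * (q:ℝ) + 2) ^ 2 + (k:ℝ) ^ 2 + 2) * (n:ℝ) :=
    aux_bra (q:ℝ) (k:ℝ) (n:ℝ) (m:ℝ) hq0 hk0 hn1 hmn'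
  set cA : ℝ := (2 * (q:ℝ) + 2) ^ 2 + (k:ℝ) ^ 2 + 2 with hcA
  have hcA0 : 0 < cA := by rw [hcA]; positivity
  have hD1 : G * ((2 * (q:ℝ) + 2 - (k:ℝ)) ^ 2 + ((n:ℝ) + (m:ℝ))) ≤
      (((q:ℝ) + 3) ^ q / (((u:ℝ) + 1) * ((u:ℝ) + 2))) * (cA * (n:ℝ)) := by
    apply mul_le_mul hGle hbra hbra_pos (by positivity)
  -- key numeric inequality
  have hnnr : (n:ℝ) = (u:ℝ) + (q:ℝ) + 2 := by exact_mod_cast congrArg (Nat.cast : ℕ → ℝ) hnu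
  have hu1r : (1:ℝ) ≤ (u:ℝ) := by exact_mod_cast hu1
  have hcu1 := (aux_cu (q:ℝ) (u:ℝ) (n:ℝ) hq0 hnnr hu1r).1
  have hcu2 := (aux_cu (q:ℝ) (u:ℝ) (n:ℝ) hq0 hnnr hu1r).2
  have hn0 : (0:ℝ) < (n:ℝ) := by linarith
  have hprod : (2 * (n:ℝ)) * (2 * (n:ℝ)) ≤
      (((q:ℝ) + 3) * ((u:ℝ) + 1)) * (((q:ℝ) + 3) * ((u:ℝ) + 2)) :=
    mul_le_mul hcu1 hcu2 (by linarith) (by positivity)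
  have hs : (0:ℝ) ≤ ((q:ℝ) + 3) ^ q * cA := by positivity
  have hfrac : (n:ℝ) / (((u:ℝ) + 1) * ((u:ℝ) + 2)) ≤ ((q:ℝ) + 3) ^ 2 / (4 * (n:ℝ)) := by
    rw [div_le_div_iff₀ huu (by positivity)]
    calc (n:ℝ) * (4 * (n:ℝ)) = (2 * (n:ℝ)) * (2 * (n:ℝ)) := by ring
      _ ≤ (((q:ℝ) + 3) * ((u:ℝ) + 1)) * (((q:ℝ) + 3) * ((u:ℝ) + 2)) := hprod
      _ = ((q:ℝ) + 3) ^ 2 * (((u:ℝ) + 1) * ((u:ℝ) + 2)) := by ring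
  have hD2 : (((q:ℝ) + 3) ^ q / (((u:ℝ) + 1) * ((u:ℝ) + 2))) * (cA * (n:ℝ)) ≤
      ((q:ℝ) + 3) ^ (q + 2) * cA / 4 / (n:ℝ) := by
    have e1 : (((q:ℝ) + 3) ^ q / (((u:ℝ) + 1) * ((u:ℝ) + 2))) * (cA * (n:ℝ)) =
        (((q:ℝ) + 3) ^ q * cA) * ((n:ℝ) / (((u:ℝ) + 1) * ((u:ℝ) + 2))) := by ring
    have e2 : ((q:ℝ) + 3) ^ (q + 2) * cA / 4 / (n:ℝ) =
        (((q:ℝ) + 3) ^ q * cA) * (((q:ℝ) + 3) ^ 2 / (4 * (n:ℝ))) := by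
      rw [pow_add]; ring
    rw [e1, e2]
    exact mul_le_mul_of_nonneg_left hfrac hs
  have hxq : (0:ℝ) ≤ x ^ (q + 2) := by positivity
  calc x ^ (q + 2) * (G * ((2 * (q:ℝ) + 2 - (k:ℝ)) ^ 2 + ((n:ℝ) + (m:ℝ))))
      ≤ x ^ (q + 2) * (((q:ℝ) + 3) ^ (q + 2) * cA / 4 / (n:ℝ)) := by
        apply mul_le_mul_of_nonneg_left (hD1.trans hD2) hxq
    _ = ((q:ℝ) + 3) ^ (q + 2) * cA / 4 * x ^ (q + 2) / (n:ℝ) := by ring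

/-- Weighted second central moment estimate:
`w_p(x)·M_{n,k}((t−x)²/w_p(t);x) ≤ N_{p,k}·x²/n`. -/
theorem Mnk_weighted_second_moment (k p : ℕ) (hk : 1 ≤ k) :
    ∃ N > (0 : ℝ), ∀ n : ℕ, k + p + 2 ≤ n → ∀ x : ℝ, 0 < x →
      wp p x * Mnk n k (fun t => (t - x) ^ 2 / wp p t) x ≤ N * x ^ 2 / (n : ℝ) := by
  set Nf : ℕ → ℝ := fun q => ((q:ℝ) + 3) ^ (q + 2) * ((2 * (q:ℝ) + 2) ^ 2 + (k:ℝ) ^ 2 + 2) / 4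
    with hNf
  have hNfpos : ∀ q, 0 < Nf q := by
    intro q
    simp only [hNf]
    positivity
  have hN0pos := hNfpos 0
  have hNppos := hNfpos p
  refine ⟨Nf 0 + Nf p, by positivity, ?_⟩
  intro n hn x hx
  have hn0 : (0:ℝ) < (n:ℝ) := by
    have : 0 < n := by omega
    exact_mod_cast this
  have M0 := moment_bound n k 0 hk (by omega) x hx
  have Mp := moment_bound n k p hk hn x hx
  have hA0 : (((2 * n - k + 1).factorial : ℝ) * x ^ (n + 1) /
        ((n.factorial : ℝ) * ((n - k).factorial : ℝ))) *
      (∫ t in Ioi (0:ℝ), t ^ (n - k) / (x + t) ^ (2 * n - k + 2) * ((t - x) ^ 2 * t ^ 0))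
      ≤ Nf 0 * x ^ 2 / n := M0.2
  have hAp : (((2 * n - k + 1).factorial : ℝ) * x ^ (n + 1) /
        ((n.factorial : ℝ) * ((n - k).factorial : ℝ))) *
      (∫ t in Ioi (0:ℝ), t ^ (n - k) / (x + t) ^ (2 * n - k + 2) * ((t - x) ^ 2 * t ^ p))
      ≤ Nf p * x ^ (p + 2) / n := Mp.2
  by_cases hp : p = 0
  · subst hp
    have hw : ∀ t : ℝ, wp 0 t = 1 := fun t => by simp [wp]
    have hfun : (fun t : ℝ => t ^ (n - k) / (x + t) ^ (2 * n - k + 2) * ((t - x) ^ 2 / wp 0 t)) =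
        fun t : ℝ => t ^ (n - k) / (x + t) ^ (2 * n - k + 2) * ((t - x) ^ 2 * t ^ 0) := by
      funext t; rw [hw t]; ring
    rw [hw x, one_mul, Mnk, hfun]
    refine hA0.trans ?_
    have hx2 : (0:ℝ) ≤ x ^ 2 / n := by positivity
    calc Nf 0 * x ^ 2 / n = Nf 0 * (x ^ 2 / n) := by ring
      _ ≤ (Nf 0 + Nf 0) * (x ^ 2 / n) := by
          apply mul_le_mul_of_nonneg_right (by linarith) hx2
      _ = (Nf 0 + Nf 0) * x ^ 2 / n := by ring
  · -- p ≥ 1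
    have hwp : wp p x = 1 / (1 + x ^ p) := by simp [wp, hp]
    have hxp : (0:ℝ) < 1 + x ^ p := by positivity
    have hw0 : 0 < wp p x := by rw [hwp]; positivity
    have hw1 : wp p x ≤ 1 := by
      rw [hwp, div_le_one hxp]
      have : (0:ℝ) ≤ x ^ p := by positivity
      linarith
    have heq : EqOn (fun t : ℝ => t ^ (n - k) / (x + t) ^ (2 * n - k + 2) * ((t - x) ^ 2 / wp p t))
        (fun t : ℝ => t ^ (n - k) / (x + t) ^ (2 * n - k + 2) * ((t - x) ^ 2 * t ^ 0) +
          t ^ (n - k) / (x + t) ^ (2 * n - k + 2) * ((t - x) ^ 2 * t ^ p)) (Ioi 0) := by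
      intro t ht
      have ht0 : (0:ℝ) < t := ht
      have h1t : (0:ℝ) < 1 + t ^ p := by positivity
      simp only [wp, if_neg hp]
      have hdd : (t - x) ^ 2 / (1 / (1 + t ^ p)) = (t - x) ^ 2 * (1 + t ^ p) := by
        rw [div_div_eq_mul_div, div_one]
      rw [hdd]
      ring
    rw [Mnk, setIntegral_congr_fun measurableSet_Ioi heq,
      integral_add M0.1 Mp.1, mul_add, mul_add]
    have term1 : wp p x * ((((2 * n - k + 1).factorial : ℝ) * x ^ (n + 1) /
          ((n.factorial : ℝ) * ((n - k).factorial : ℝ))) *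
        (∫ t in Ioi (0:ℝ), t ^ (n - k) / (x + t) ^ (2 * n - k + 2) * ((t - x) ^ 2 * t ^ 0)))
        ≤ Nf 0 * x ^ 2 / n := by
      calc wp p x * _ ≤ wp p x * (Nf 0 * x ^ 2 / n) :=
            mul_le_mul_of_nonneg_left hA0 (le_of_lt hw0)
        _ ≤ 1 * (Nf 0 * x ^ 2 / n) :=
            mul_le_mul_of_nonneg_right hw1 (by positivity)
        _ = Nf 0 * x ^ 2 / n := one_mul _
    have term2 : wp p x * ((((2 * n - k + 1).factorial : ℝ) * x ^ (n + 1) /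
          ((n.factorial : ℝ) * ((n - k).factorial : ℝ))) *
        (∫ t in Ioi (0:ℝ), t ^ (n - k) / (x + t) ^ (2 * n - k + 2) * ((t - x) ^ 2 * t ^ p)))
        ≤ Nf p * x ^ 2 / n := by
      have step1 := mul_le_mul_of_nonneg_left hAp (le_of_lt hw0)
      refine step1.trans ?_
      rw [hwp, div_mul_eq_mul_div, one_mul, div_le_iff₀ hxp]
      have hkey : x ^ (p + 2) ≤ x ^ 2 * (1 + x ^ p) := by
        have hpe : x ^ (p + 2) = x ^ 2 * x ^ p := by rw [pow_add]; ring
        rw [hpe]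
        have h2 : (0:ℝ) ≤ x ^ 2 := by positivity
        nlinarith [h2]
      calc Nf p * x ^ (p + 2) / n ≤ Nf p * (x ^ 2 * (1 + x ^ p)) / n := by
            apply div_le_div_of_nonneg_right ?_ hn0.le <;>
              try exact mul_le_mul_of_nonneg_left hkey (le_of_lt hNppos)
        _ = Nf p * x ^ 2 / n * (1 + x ^ p) := by ring
    calc wp p x * _ + wp p x * _ ≤ Nf 0 * x ^ 2 / n + Nf p * x ^ 2 / n :=
          add_le_add term1 term2
      _ = (Nf 0 + Nf p) * x ^ 2 / n := by ring
end
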